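/- arXiv:1907.01080 — 4 statements merged into one kernel-verified Lean document; each statement's English description precedes it below -/
import Mathlib

section
/- Let K = ZMod 2 and n = 3, and let P, Q, R ∈ (Fin 3 → K) be three pairwise-distinct points. Let w₁, w₂, w₃ be the numbers of coordinates in which the pairs (P,Q), (P,R), (Q,R) respectively differ. Then the number of distinct reduced Gröbner bases of the vanishing ideal I({P, Q, R}) equals 3 − card {i ∈ {1,2,3} : w_i = 1}. -/
open MvPolynomial

/-- The leading monomial of `f` with respect to the monomial order `m`:
the `m`-largest monomial in the support of `f` (equal to `0` if `f = 0`). -/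
noncomputable def leadMon {n : ℕ} {K : Type*} [CommSemiring K]
    (m : MonomialOrder (Fin n)) (f : MvPolynomial (Fin n) K) : Fin n →₀ ℕ :=
  m.toSyn.symm (f.support.sup fun d => m.toSyn d)

/-- The leading coefficient of `f` with respect to the monomial order `m`. -/
noncomputable def leadCoeff {n : ℕ} {K : Type*} [CommSemiring K]
    (m : MonomialOrder (Fin n)) (f : MvPolynomial (Fin n) K) : K :=
  f.coeff (leadMon m f)

/-- `G` is a Gröbner basis of the ideal `I` with respect to the monomial order `m`:
`G` is a finite set of nonzero elements of `I` such that the leading monomial of every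
nonzero element of `I` is divisible by the leading monomial of some `g ∈ G`.
(Divisibility of monomials is the pointwise order `≤` on exponent vectors.) -/
def IsGroebnerBasis {n : ℕ} {K : Type*} [Field K] (m : MonomialOrder (Fin n))
    (I : Ideal (MvPolynomial (Fin n) K)) (G : Finset (MvPolynomial (Fin n) K)) : Prop :=
  (∀ g ∈ G, g ≠ 0) ∧ ((G : Set (MvPolynomial (Fin n) K)) ⊆ I) ∧
    ∀ f ∈ I, f ≠ 0 → ∃ g ∈ G, leadMon m g ≤ leadMon m f

/-- `G` is the reduced Gröbner basis of `I` with respect to `m`: it is a Gröbner basis,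
every element has leading coefficient `1`, and no monomial in the support of any `g ∈ G`
is divisible by the leading monomial of another element of `G`. -/
def IsReducedGroebnerBasis {n : ℕ} {K : Type*} [Field K] (m : MonomialOrder (Fin n))
    (I : Ideal (MvPolynomial (Fin n) K)) (G : Finset (MvPolynomial (Fin n) K)) : Prop :=
  IsGroebnerBasis m I G ∧ (∀ g ∈ G, leadCoeff m g = 1) ∧
    ∀ g ∈ G, ∀ g' ∈ G, g' ≠ g → ∀ d ∈ g.support, ¬ leadMon m g' ≤ d

/-- The number of distinct reduced Gröbner bases of `I`, i.e. the cardinality of the set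
of all `G` that are the reduced Gröbner basis of `I` with respect to some monomial order. -/
noncomputable def numReducedGB {n : ℕ} {K : Type*} [Field K]
    (I : Ideal (MvPolynomial (Fin n) K)) : ℕ :=
  Set.ncard {G : Finset (MvPolynomial (Fin n) K) |
    ∃ m : MonomialOrder.{0,0} (Fin n), IsReducedGroebnerBasis m I G}




open Finsupp

noncomputable abbrev ee (x : Fin 3) : Fin 3 →₀ ℕ := Finsupp.single x 1
abbrev MP := MvPolynomial (Fin 3) (ZMod 2)

section A
variable {n : ℕ} {K : Type*} [CommSemiring K] (m : MonomialOrder (Fin n))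
  (f : MvPolynomial (Fin n) K)

lemma toSyn_leadMon : m.toSyn (leadMon m f) = f.support.sup fun d => m.toSyn d := by
  simp [leadMon]

lemma le_leadMon {d : Fin n →₀ ℕ} (hd : d ∈ f.support) :
    m.toSyn d ≤ m.toSyn (leadMon m f) := by
  rw [toSyn_leadMon]; exact Finset.le_sup hd

lemma leadMon_mem_support (hf : f ≠ 0) : leadMon m f ∈ f.support := by
  obtain ⟨b, hb, he⟩ := Finset.exists_mem_eq_sup f.support
    (MvPolynomial.support_nonempty.mpr hf) (fun d => m.toSyn d)
  have : leadMon m f = b := by rw [leadMon, he, AddEquiv.symm_apply_apply]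
  rwa [this]

lemma leadMon_eq_of {μ : Fin n →₀ ℕ} (hμ : μ ∈ f.support)
    (h : ∀ d ∈ f.support, m.toSyn d ≤ m.toSyn μ) : leadMon m f = μ := by
  have : f.support.sup (fun d => m.toSyn d) = m.toSyn μ :=
    le_antisymm (Finset.sup_le h) (Finset.le_sup hμ)
  rw [leadMon, this, AddEquiv.symm_apply_apply]

lemma toSyn_zero_eq : m.toSyn 0 = 0 := map_zero _

lemma toSyn_pos {d : Fin n →₀ ℕ} (hd : d ≠ 0) : 0 < m.toSyn d := by
  rcases lt_or_eq_of_le (bot_le (a := m.toSyn d)) with h | h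
  · simpa using h
  · exact absurd (m.toSyn.injective (by simpa using h.symm)) hd

lemma toSyn_lt_of_lt {d d' : Fin n →₀ ℕ} (h : d ≤ d') (hne : d ≠ d') :
    m.toSyn d < m.toSyn d' :=
  lt_of_le_of_ne (m.toSyn_monotone h) (fun he => hne (m.toSyn.injective he))

lemma eq_of_syn_le_of_le {d μ : Fin n →₀ ℕ} (h1 : m.toSyn d ≤ m.toSyn μ) (h2 : μ ≤ d) :
    d = μ :=
  m.toSyn.injective (le_antisymm h1 (m.toSyn_monotone h2))

end A

lemma fne {a b : Fin 3 →₀ ℕ} (x : Fin 3) (h : a x ≠ b x) : a ≠ b :=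
  fun he => h (by rw [he])

@[simp] lemma sapp (s t : Fin 3) (n : ℕ) :
    (Finsupp.single s n : Fin 3 →₀ ℕ) t = if s = t then n else 0 := Finsupp.single_apply

section apps
variable {j k x : Fin 3}
lemma ee_app_self (j : Fin 3) : ee j j = 1 := by simp
lemma ee_app_ne (h : x ≠ j) : ee j x = 0 := by simp [Ne.symm h]
lemma ee_app_ne' (h : j ≠ x) : ee j x = 0 := by simp [h]
lemma sq_app_self (j : Fin 3) : (Finsupp.single j 2 : Fin 3 →₀ ℕ) j = 2 := by simp
lemma sq_app_ne (h : x ≠ j) : (Finsupp.single j 2 : Fin 3 →₀ ℕ) x = 0 := by simp [Ne.symm h]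
lemma sq_app_ne' (h : j ≠ x) : (Finsupp.single j 2 : Fin 3 →₀ ℕ) x = 0 := by simp [h]
lemma eejk_app_j (hjk : j ≠ k) : (ee j + ee k) j = 1 := by
  rw [Finsupp.add_apply, ee_app_self, ee_app_ne hjk]
lemma eejk_app_k (hjk : j ≠ k) : (ee j + ee k) k = 1 := by
  rw [Finsupp.add_apply, ee_app_self, ee_app_ne (Ne.symm hjk)]
lemma eejk_app_ne (h1 : x ≠ j) (h2 : x ≠ k) : (ee j + ee k) x = 0 := by
  rw [Finsupp.add_apply, ee_app_ne h1, ee_app_ne h2]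
end apps

lemma ee_ne_zero (t : Fin 3) : ee t ≠ 0 := fne t (by rw [ee_app_self]; simp)
lemma ee_ne_ee {s t : Fin 3} (h : s ≠ t) : ee s ≠ ee t :=
  fne s (by rw [ee_app_self, ee_app_ne h]; omega)
lemma sq_ne_ee (s t : Fin 3) : Finsupp.single s 2 ≠ ee t := by
  rcases eq_or_ne s t with rfl | h
  · exact fne s (by rw [sq_app_self, ee_app_self]; omega)
  · exact fne s (by rw [sq_app_self, ee_app_ne h]; omega)
lemma sq_ne_zero (t : Fin 3) : Finsupp.single t 2 ≠ 0 := fne t (by rw [sq_app_self]; simp)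
lemma sq_ne_sq {s t : Fin 3} (h : s ≠ t) : Finsupp.single s 2 ≠ Finsupp.single t 2 :=
  fne s (by rw [sq_app_self, sq_app_ne h]; omega)

section B
variable {i j k : Fin 3}

lemma eejk_ne_zero (hjk : j ≠ k) : ee j + ee k ≠ 0 :=
  fne j (by rw [eejk_app_j hjk]; simp)
lemma eejk_ne_ee (hjk : j ≠ k) (t : Fin 3) : ee j + ee k ≠ ee t := by
  rcases eq_or_ne t j with rfl | h
  · exact fne k (by rw [eejk_app_k hjk, ee_app_ne (Ne.symm hjk)]; omega)
  · exact fne j (by rw [eejk_app_j hjk, ee_app_ne' h]; omega)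
lemma eejk_ne_sq (hjk : j ≠ k) (t : Fin 3) : ee j + ee k ≠ Finsupp.single t 2 := by
  rcases eq_or_ne t j with rfl | h
  · exact fne t (by rw [eejk_app_j hjk, sq_app_self]; omega)
  · exact fne j (by rw [eejk_app_j hjk, sq_app_ne' h]; omega)

lemma single_ext {t : Fin 3} {d : Fin 3 →₀ ℕ} (h : ∀ x, x ≠ t → d x = 0) :
    d = Finsupp.single t (d t) := by
  ext x
  rcases eq_or_ne x t with rfl | hx
  · simp
  · rw [sapp, if_neg (Ne.symm hx), h x hx]

lemma le_ee_iff {d : Fin 3 →₀ ℕ} (t : Fin 3) (h : d ≤ ee t) : d = 0 ∨ d = ee t := by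
  have hv : ∀ x, d x ≤ (ee t) x := fun x => Finsupp.le_def.mp h x
  have hx0 : ∀ x, x ≠ t → d x = 0 := fun x hx => by
    have := hv x; rw [ee_app_ne hx] at this; omega
  have ht : d t ≤ 1 := by have := hv t; rwa [ee_app_self] at this
  have hext := single_ext hx0
  have : d t = 0 ∨ d t = 1 := by omega
  rcases this with h1 | h1
  · left; rw [hext, h1]; simp
  · right; rw [hext, h1]

lemma le_sq_iff {d : Fin 3 →₀ ℕ} (t : Fin 3) (h : d ≤ Finsupp.single t 2) :
    d = 0 ∨ d = ee t ∨ d = Finsupp.single t 2 := by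
  have hv : ∀ x, d x ≤ (Finsupp.single t 2 : Fin 3 →₀ ℕ) x := fun x => Finsupp.le_def.mp h x
  have hx0 : ∀ x, x ≠ t → d x = 0 := fun x hx => by
    have := hv x; rw [sq_app_ne hx] at this; omega
  have ht : d t ≤ 2 := by have := hv t; rwa [sq_app_self] at this
  have hext := single_ext hx0
  have : d t = 0 ∨ d t = 1 ∨ d t = 2 := by omega
  rcases this with h1 | h1 | h1
  · left; rw [hext, h1]; simp
  · right; left; rw [hext, h1]
  · right; right; rw [hext, h1]

lemma jk_ext (hjk : j ≠ k) (hcov : ∀ x : Fin 3, x = i ∨ x = j ∨ x = k)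
    {d : Fin 3 →₀ ℕ} (h0 : d i = 0) :
    d = Finsupp.single j (d j) + Finsupp.single k (d k) := by
  ext x
  rw [Finsupp.add_apply, sapp, sapp]
  rcases hcov x with rfl | rfl | rfl
  · rcases eq_or_ne j x with rfl | hxj
    · rw [if_pos rfl, if_neg (Ne.symm hjk)]; omega
    · rcases eq_or_ne k x with rfl | hxk
      · rw [if_neg hxj, if_pos rfl]; omega
      · rw [if_neg hxj, if_neg hxk, h0]
  · rw [if_pos rfl, if_neg (Ne.symm hjk)]; omega
  · rw [if_neg hjk, if_pos rfl]; omega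

lemma le_eejk_iff (hij : i ≠ j) (hik : i ≠ k) (hjk : j ≠ k)
    (hcov : ∀ x : Fin 3, x = i ∨ x = j ∨ x = k) {d : Fin 3 →₀ ℕ} (h : d ≤ ee j + ee k) :
    d = 0 ∨ d = ee j ∨ d = ee k ∨ d = ee j + ee k := by
  have hv : ∀ x, d x ≤ (ee j + ee k) x := fun x => Finsupp.le_def.mp h x
  have hj : d j ≤ 1 := by have := hv j; rwa [eejk_app_j hjk] at this
  have hk : d k ≤ 1 := by have := hv k; rwa [eejk_app_k hjk] at this
  have hi0 : d i = 0 := by have := hv i; rw [eejk_app_ne hij hik] at this; omega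
  have hext := jk_ext hjk hcov hi0
  have hcj : d j = 0 ∨ d j = 1 := by omega
  have hck : d k = 0 ∨ d k = 1 := by omega
  rcases hcj with h1 | h1 <;> rcases hck with h2 | h2 <;> rw [h1, h2] at hext
  · left; rw [hext]; simp
  · right; right; left; rw [hext]; simp
  · right; left; rw [hext]; simp
  · right; right; right; rw [hext]

lemma complement_lemma (hij : i ≠ j) (hik : i ≠ k) (hjk : j ≠ k)
    (hcov : ∀ x : Fin 3, x = i ∨ x = j ∨ x = k)
    {d : Fin 3 →₀ ℕ} (h1 : d i = 0) (h2 : d j ≤ 1) (h3 : d k ≤ 1)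
    (h4 : ¬(1 ≤ d j ∧ 1 ≤ d k)) : d = 0 ∨ d = ee j ∨ d = ee k := by
  have hext := jk_ext hjk hcov h1
  have hcj : d j = 0 ∨ d j = 1 := by omega
  have hck : d k = 0 ∨ d k = 1 := by omega
  rcases hcj with h5 | h5 <;> rcases hck with h6 | h6 <;> rw [h5, h6] at hext
  · left; rw [hext]; simp
  · right; right; rw [hext]; simp
  · right; left; rw [hext]; simp
  · exact absurd ⟨by omega, by omega⟩ h4

lemma single_le_iff' {t : Fin 3} {n : ℕ} {d : Fin 3 →₀ ℕ} :
    Finsupp.single t n ≤ d ↔ n ≤ d t := Finsupp.single_le_iff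

lemma mingen_lemma (hij : i ≠ j) (hik : i ≠ k) (hjk : j ≠ k)
    (hcov : ∀ x : Fin 3, x = i ∨ x = j ∨ x = k) {d : Fin 3 →₀ ℕ}
    (hdiv : ∀ d', d' ≤ d → d' ≠ d → (d' = 0 ∨ d' = ee j ∨ d' = ee k))
    (hd : ¬(d = 0 ∨ d = ee j ∨ d = ee k)) :
    d = ee i ∨ d = Finsupp.single j 2 ∨ d = Finsupp.single k 2 ∨ d = ee j + ee k := by
  push_neg at hd
  obtain ⟨hd0, hdj, hdk⟩ := hd
  rcases Nat.eq_zero_or_pos (d i) with hi0 | hi1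
  · have hext := jk_ext hjk hcov hi0
    rcases Nat.eq_zero_or_pos (d j) with hj0 | hj1
    · have hdk2 : 2 ≤ d k := by
        by_contra h
        have hck : d k = 0 ∨ d k = 1 := by omega
        rcases hck with h6 | h6 <;> rw [hj0, h6] at hext
        · exact hd0 (by rw [hext]; simp)
        · exact hdk (by rw [hext]; simp)
      have hle : Finsupp.single k 2 ≤ d := single_le_iff'.mpr hdk2
      rcases eq_or_ne (Finsupp.single k 2) d with he | hne
      · exact Or.inr (Or.inr (Or.inl he.symm))
      · rcases hdiv _ hle hne with h | h | h
        · exact absurd h (sq_ne_zero k)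
        · exact absurd h (sq_ne_ee k j)
        · exact absurd h (sq_ne_ee k k)
    · rcases Nat.eq_zero_or_pos (d k) with hk0 | hk1
      · have hdj2 : 2 ≤ d j := by
          by_contra h
          have hcj : d j = 0 ∨ d j = 1 := by omega
          rcases hcj with h6 | h6 <;> rw [h6, hk0] at hext
          · exact hd0 (by rw [hext]; simp)
          · exact hdj (by rw [hext]; simp)
        have hle : Finsupp.single j 2 ≤ d := single_le_iff'.mpr hdj2
        rcases eq_or_ne (Finsupp.single j 2) d with he | hne
        · exact Or.inr (Or.inl he.symm)
        · rcases hdiv _ hle hne with h | h | h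
          · exact absurd h (sq_ne_zero j)
          · exact absurd h (sq_ne_ee j j)
          · exact absurd h (sq_ne_ee j k)
      · have hle : ee j + ee k ≤ d := by
          rw [Finsupp.le_def]; intro x
          rcases hcov x with rfl | rfl | rfl
          · rw [eejk_app_ne hij hik]; omega
          · rw [eejk_app_j hjk]; omega
          · rw [eejk_app_k hjk]; omega
        rcases eq_or_ne (ee j + ee k) d with he | hne
        · exact Or.inr (Or.inr (Or.inr he.symm))
        · rcases hdiv _ hle hne with h | h | h
          · exact absurd h (eejk_ne_zero hjk)
          · exact absurd h (eejk_ne_ee hjk j)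
          · exact absurd h (eejk_ne_ee hjk k)
  · have hle : ee i ≤ d := single_le_iff'.mpr hi1
    rcases eq_or_ne (ee i) d with he | hne
    · exact Or.inl he.symm
    · rcases hdiv _ hle hne with h | h | h
      · exact absurd h (ee_ne_zero i)
      · exact absurd h (ee_ne_ee hij)
      · exact absurd h (ee_ne_ee hik)
end B

-- bit lemmas
set_option synthInstance.maxSize 400 in
set_option synthInstance.maxHeartbeats 1000000 in
set_option maxHeartbeats 2000000 in
lemma interp_total : ∀ pj pk qj qk rj rk u v w : ZMod 2,
    ∃ c : ZMod 2 × ZMod 2 × ZMod 2,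
      ((pj ≠ qj ∨ pk ≠ qk) → (pj ≠ rj ∨ pk ≠ rk) → (qj ≠ rj ∨ qk ≠ rk) →
        (c.1 + c.2.1 * pj + c.2.2 * pk = u ∧ c.1 + c.2.1 * qj + c.2.2 * qk = v ∧
         c.1 + c.2.1 * rj + c.2.2 * rk = w)) := by decide

set_option synthInstance.maxSize 400 in
set_option synthInstance.maxHeartbeats 1000000 in
set_option maxHeartbeats 2000000 in
lemma indep_bits : ∀ pj pk qj qk rj rk : ZMod 2,
    (pj ≠ qj ∨ pk ≠ qk) → (pj ≠ rj ∨ pk ≠ rk) → (qj ≠ rj ∨ qk ≠ rk) →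
    ∀ c0 c1 c2 : ZMod 2, c0 + c1 * pj + c2 * pk = 0 → c0 + c1 * qj + c2 * qk = 0 →
      c0 + c1 * rj + c2 * rk = 0 → c0 = 0 ∧ c1 = 0 ∧ c2 = 0 := by decide

lemma kernel2 : ∀ pj pk rj rk : ZMod 2, ∃ c0 c1 c2 : ZMod 2,
    ¬(c0 = 0 ∧ c1 = 0 ∧ c2 = 0) ∧ c0 + c1 * pj + c2 * pk = 0 ∧
      c0 + c1 * rj + c2 * rk = 0 := by decide

set_option synthInstance.maxSize 400 in
set_option synthInstance.maxHeartbeats 1000000 in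
set_option maxHeartbeats 4000000 in
lemma kernel4 : ∀ pj pk qj qk rj rk : ZMod 2, ∃ c0 c1 c2 c3 : ZMod 2,
    ¬(c0 = 0 ∧ c1 = 0 ∧ c2 = 0 ∧ c3 = 0) ∧
    c0 + c1 * pj + c2 * pk + c3 * (pj * pk) = 0 ∧
    c0 + c1 * qj + c2 * qk + c3 * (qj * qk) = 0 ∧
    c0 + c1 * rj + c2 * rk + c3 * (rj * rk) = 0 := by decide

lemma three_distinct : ∀ a b c : ZMod 2, a ≠ b → a ≠ c → b ≠ c → False := by decide
lemma z2sq : ∀ a : ZMod 2, a ^ 2 + a = 0 := by decide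

noncomputable def icoef (pj pk qj qk rj rk u v w : ZMod 2) : ZMod 2 × ZMod 2 × ZMod 2 :=
  (interp_total pj pk qj qk rj rk u v w).choose

lemma icoef_spec (pj pk qj qk rj rk u v w : ZMod 2) (h1 : pj ≠ qj ∨ pk ≠ qk)
    (h2 : pj ≠ rj ∨ pk ≠ rk) (h3 : qj ≠ rj ∨ qk ≠ rk) :
    (icoef pj pk qj qk rj rk u v w).1 + (icoef pj pk qj qk rj rk u v w).2.1 * pj +
        (icoef pj pk qj qk rj rk u v w).2.2 * pk = u ∧
      (icoef pj pk qj qk rj rk u v w).1 + (icoef pj pk qj qk rj rk u v w).2.1 * qj +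
        (icoef pj pk qj qk rj rk u v w).2.2 * qk = v ∧
      (icoef pj pk qj qk rj rk u v w).1 + (icoef pj pk qj qk rj rk u v w).2.1 * rj +
        (icoef pj pk qj qk rj rk u v w).2.2 * rk = w :=
  (interp_total pj pk qj qk rj rk u v w).choose_spec h1 h2 h3

-- evaluation helpers
lemma prodpow_zero (p : Fin 3 → ZMod 2) : (0 : Fin 3 →₀ ℕ).prod (fun i n => p i ^ n) = 1 :=
  Finsupp.prod_zero_index

lemma prodpow_single (p : Fin 3 → ZMod 2) (t : Fin 3) (n : ℕ) :
    (Finsupp.single t n).prod (fun i n => p i ^ n) = p t ^ n :=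
  Finsupp.prod_single_index (pow_zero _)

lemma prodpow_eejk (p : Fin 3 → ZMod 2) (j k : Fin 3) :
    (ee j + ee k).prod (fun i n => p i ^ n) = p j * p k := by
  rw [Finsupp.prod_add_index' (fun a => pow_zero _) (fun a b c => pow_add _ _ _),
    prodpow_single, prodpow_single, pow_one, pow_one]

lemma eval_eq_sum_of_subset (f : MP) (s : Finset (Fin 3 →₀ ℕ)) (h : f.support ⊆ s)
    (p : Fin 3 → ZMod 2) :
    eval p f = ∑ d ∈ s, f.coeff d * d.prod (fun i n => p i ^ n) := by
  rw [eval_eq]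
  apply Finset.sum_subset h
  intro d _ hd
  rw [MvPolynomial.notMem_support_iff.mp hd, zero_mul]


set_option synthInstance.maxSize 400 in
set_option synthInstance.maxHeartbeats 1000000 in
set_option maxHeartbeats 4000000 in
lemma kernel_lin4 : ∀ pj pk pi qj qk qi rj rk ri : ZMod 2, ∃ c0 c1 c2 c3 : ZMod 2,
    ¬(c0 = 0 ∧ c1 = 0 ∧ c2 = 0 ∧ c3 = 0) ∧
    c0 + c1 * pj + c2 * pk + c3 * pi = 0 ∧
    c0 + c1 * qj + c2 * qk + c3 * qi = 0 ∧
    c0 + c1 * rj + c2 * rk + c3 * ri = 0 := by decide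

lemma diff_transfer : ∀ a a' b b' c ct : ZMod 2,
    a + (c + ct * b) = 0 → a' + (c + ct * b') = 0 → a ≠ a' → b ≠ b' := by decide

lemma z2add : ∀ a : ZMod 2, a + a = 0 := by decide

section D
variable (P Q R : Fin 3 → ZMod 2)

noncomputable def Iv : Ideal MP := vanishingIdeal (ZMod 2) ({P, Q, R} : Set (Fin 3 → ZMod 2))

lemma mem_Iv {f : MP} : f ∈ Iv P Q R ↔ eval P f = 0 ∧ eval Q f = 0 ∧ eval R f = 0 := by
  simp [Iv, mem_vanishingIdeal_iff, Set.mem_insert_iff, forall_eq_or_imp]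

def Good (j k : Fin 3) : Prop :=
  (P j ≠ Q j ∨ P k ≠ Q k) ∧ (P j ≠ R j ∨ P k ≠ R k) ∧ (Q j ≠ R j ∨ Q k ≠ R k)

noncomputable def sqp (t : Fin 3) : MP := monomial (Finsupp.single t 2) 1 + monomial (ee t) 1

noncomputable def linp (j k : Fin 3) (μ : Fin 3 →₀ ℕ) (c : ZMod 2 × ZMod 2 × ZMod 2) : MP :=
  monomial μ 1 + monomial 0 c.1 + monomial (ee j) c.2.1 + monomial (ee k) c.2.2

lemma supp_sqp (t : Fin 3) : (sqp t).support ⊆ {Finsupp.single t 2, ee t} := by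
  refine (MvPolynomial.support_add).trans ?_
  apply Finset.union_subset
  · exact (support_monomial_subset).trans (by simp)
  · exact (support_monomial_subset).trans (by simp)

lemma supp_linp (j k : Fin 3) (μ : Fin 3 →₀ ℕ) (c : ZMod 2 × ZMod 2 × ZMod 2) :
    (linp j k μ c).support ⊆ {μ, 0, ee j, ee k} := by
  refine (MvPolynomial.support_add).trans (Finset.union_subset ((MvPolynomial.support_add).trans (Finset.union_subset
    ((MvPolynomial.support_add).trans (Finset.union_subset ?_ ?_)) ?_)) ?_) <;>
    refine (support_monomial_subset).trans (by simp)

lemma coeff_sqp_lead (t : Fin 3) : coeff (Finsupp.single t 2) (sqp t) = 1 := by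
  rw [sqp, coeff_add, coeff_monomial, coeff_monomial, if_pos rfl,
    if_neg (Ne.symm (sq_ne_ee t t)), add_zero]

lemma eval_sqp (p : Fin 3 → ZMod 2) (t : Fin 3) : eval p (sqp t) = 0 := by
  rw [sqp, map_add, eval_monomial, eval_monomial, prodpow_single, prodpow_single,
    one_mul, one_mul, pow_one, z2sq]

lemma eval_linp (p : Fin 3 → ZMod 2) (j k : Fin 3) (μ : Fin 3 →₀ ℕ) (c : ZMod 2 × ZMod 2 × ZMod 2) :
    eval p (linp j k μ c) =
      μ.prod (fun i n => p i ^ n) + (c.1 + c.2.1 * p j + c.2.2 * p k) := by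
  rw [linp, map_add, map_add, map_add, eval_monomial, eval_monomial, eval_monomial,
    eval_monomial, prodpow_zero, prodpow_single, prodpow_single, one_mul, mul_one, pow_one,
    pow_one]
  ring

lemma std0 {j k : Fin 3} (hjk : j ≠ k) (hg : Good P Q R j k) {f : MP} (hf : f ∈ Iv P Q R)
    (hsupp : f.support ⊆ {0, ee j, ee k}) : f = 0 := by
  have hsum : ∀ p : Fin 3 → ZMod 2, eval p f =
      coeff 0 f + coeff (ee j) f * p j + coeff (ee k) f * p k := by
    intro p
    rw [eval_eq_sum_of_subset f _ hsupp p, Finset.sum_insert (by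
        simp only [Finset.mem_insert, Finset.mem_singleton]
        push_neg
        exact ⟨(ee_ne_zero j).symm, (ee_ne_zero k).symm⟩),
      Finset.sum_insert (by simp only [Finset.mem_singleton]; exact ee_ne_ee hjk),
      Finset.sum_singleton, prodpow_zero, prodpow_single, prodpow_single, mul_one, pow_one,
      pow_one]
    ring
  obtain ⟨hP, hQ, hR⟩ := (mem_Iv P Q R).mp hf
  rw [hsum P] at hP; rw [hsum Q] at hQ; rw [hsum R] at hR
  obtain ⟨h0, h1, h2⟩ := indep_bits (P j) (P k) (Q j) (Q k) (R j) (R k) hg.1 hg.2.1 hg.2.2 _ _ _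
    hP hQ hR
  ext d
  by_cases hd : d ∈ f.support
  · rcases Finset.mem_insert.mp (hsupp hd) with rfl | hd2
    · simpa using h0
    · rcases Finset.mem_insert.mp hd2 with rfl | hd3
      · simpa using h1
      · rw [Finset.mem_singleton.mp hd3]; simpa using h2
  · simpa using MvPolynomial.notMem_support_iff.mp hd
end D

-- permuted lexicographic monomial order
noncomputable def permLex (e : Fin 3 ≃ Fin 3) : MonomialOrder (Fin 3) where
  syn := Lex (Fin 3 →₀ ℕ)
  toSyn := (Finsupp.domCongr e).trans { toEquiv := toLex, map_add' := toLex_add }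
  toSyn_monotone := by
    intro a b h
    apply Finsupp.toLex_monotone
    intro x
    simp only [Finsupp.domCongr_apply, Finsupp.equivMapDomain_apply]
    exact Finsupp.le_def.mp h _

lemma permLex_toSyn (e : Fin 3 ≃ Fin 3) (d : Fin 3 →₀ ℕ) :
    (permLex e).toSyn d = toLex (Finsupp.equivMapDomain e d) := rfl

lemma lex_single_lt {s t : Fin 3} (m n : ℕ) (h : t < s) (hn : 0 < n) :
    toLex (Finsupp.single s m) < toLex (Finsupp.single t n) := by
  rw [Finsupp.Lex.lt_iff]
  refine ⟨t, ?_, ?_⟩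
  · intro x hx
    have hxs : s ≠ x := by intro he; subst he; exact absurd (hx.trans h) (lt_irrefl _)
    have hxt : t ≠ x := ne_of_gt hx
    simp [Finsupp.single_apply, hxs, hxt]
  · have hst : s ≠ t := ne_of_gt h
    simp [Finsupp.single_apply, hst, hn]

lemma permLex_ee_lt (e : Fin 3 ≃ Fin 3) {a b : Fin 3} (h : e b < e a) (m n : ℕ) (hn : 0 < n) :
    (permLex e).toSyn (Finsupp.single a m) < (permLex e).toSyn (Finsupp.single b n) := by
  rw [permLex_toSyn, permLex_toSyn, Finsupp.equivMapDomain_single, Finsupp.equivMapDomain_single]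
  exact lex_single_lt m n h hn

-- new material
lemma coeff_linp_lead (j k : Fin 3) (μ : Fin 3 →₀ ℕ) (c : ZMod 2 × ZMod 2 × ZMod 2)
    (h0 : μ ≠ 0) (hj : μ ≠ ee j) (hk : μ ≠ ee k) : coeff μ (linp j k μ c) = 1 := by
  rw [linp, coeff_add, coeff_add, coeff_add, coeff_monomial, coeff_monomial, coeff_monomial,
    coeff_monomial, if_pos rfl, if_neg (Ne.symm h0), if_neg (Ne.symm hj), if_neg (Ne.symm hk)]
  simp

lemma ee_le_sq (t : Fin 3) : ee t ≤ Finsupp.single t 2 :=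
  single_le_iff'.mpr (by rw [sq_app_self]; omega)

lemma ee_le_eejk_l {j k : Fin 3} (hjk : j ≠ k) : ee j ≤ ee j + ee k :=
  single_le_iff'.mpr (by rw [eejk_app_j hjk])
lemma ee_le_eejk_r {j k : Fin 3} (hjk : j ≠ k) : ee k ≤ ee j + ee k :=
  single_le_iff'.mpr (by rw [eejk_app_k hjk])

lemma syn_zero_le (m : MonomialOrder (Fin 3)) (d : Fin 3 →₀ ℕ) :
    m.toSyn 0 ≤ m.toSyn d := by rw [toSyn_zero_eq]; exact bot_le

lemma leadMon_sqp (m : MonomialOrder (Fin 3)) (t : Fin 3) :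
    leadMon m (sqp t) = Finsupp.single t 2 := by
  apply leadMon_eq_of
  · exact MvPolynomial.mem_support_iff.mpr (by rw [coeff_sqp_lead]; exact one_ne_zero)
  · intro d hd
    rcases Finset.mem_insert.mp (supp_sqp t hd) with rfl | hd2
    · exact le_refl _
    · rw [Finset.mem_singleton.mp hd2]
      exact m.toSyn_monotone (ee_le_sq t)

lemma leadCoeff_sqp (m : MonomialOrder (Fin 3)) (t : Fin 3) : leadCoeff m (sqp t) = 1 := by
  rw [leadCoeff, leadMon_sqp, coeff_sqp_lead]

lemma leadMon_linp (m : MonomialOrder (Fin 3)) (j k : Fin 3) (μ : Fin 3 →₀ ℕ)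
    (c : ZMod 2 × ZMod 2 × ZMod 2) (h0 : μ ≠ 0) (hj : μ ≠ ee j) (hk : μ ≠ ee k)
    (hbj : m.toSyn (ee j) ≤ m.toSyn μ) (hbk : m.toSyn (ee k) ≤ m.toSyn μ) :
    leadMon m (linp j k μ c) = μ := by
  apply leadMon_eq_of
  · exact MvPolynomial.mem_support_iff.mpr (by
      rw [coeff_linp_lead j k μ c h0 hj hk]; exact one_ne_zero)
  · intro d hd
    rcases Finset.mem_insert.mp (supp_linp j k μ c hd) with rfl | hd2
    · exact le_refl _
    · rcases Finset.mem_insert.mp hd2 with rfl | hd3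
      · exact syn_zero_le m μ
      · rcases Finset.mem_insert.mp hd3 with rfl | hd4
        · exact hbj
        · rw [Finset.mem_singleton.mp hd4]; exact hbk

lemma leadCoeff_linp (m : MonomialOrder (Fin 3)) (j k : Fin 3) (μ : Fin 3 →₀ ℕ)
    (c : ZMod 2 × ZMod 2 × ZMod 2) (h0 : μ ≠ 0) (hj : μ ≠ ee j) (hk : μ ≠ ee k)
    (hbj : m.toSyn (ee j) ≤ m.toSyn μ) (hbk : m.toSyn (ee k) ≤ m.toSyn μ) :
    leadCoeff m (linp j k μ c) = 1 := by
  rw [leadCoeff, leadMon_linp m j k μ c h0 hj hk hbj hbk, coeff_linp_lead j k μ c h0 hj hk]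

lemma notle_single {t : Fin 3} {n : ℕ} {d : Fin 3 →₀ ℕ} (h : d t < n) :
    ¬ Finsupp.single t n ≤ d := fun hle => absurd (single_le_iff'.mp hle) (by omega)

lemma notle_eejk {j k : Fin 3} (hjk : j ≠ k) {d : Fin 3 →₀ ℕ} (h : d j = 0 ∨ d k = 0) :
    ¬ (ee j + ee k) ≤ d := by
  intro hle
  have hj := Finsupp.le_def.mp hle j
  have hk := Finsupp.le_def.mp hle k
  rw [eejk_app_j hjk] at hj
  rw [eejk_app_k hjk] at hk
  omega

lemma nonstd_div {i j k : Fin 3} (hij : i ≠ j) (hik : i ≠ k) (hjk : j ≠ k)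
    (hcov : ∀ x : Fin 3, x = i ∨ x = j ∨ x = k) {d : Fin 3 →₀ ℕ}
    (hd : ¬(d = 0 ∨ d = ee j ∨ d = ee k)) :
    ee i ≤ d ∨ Finsupp.single j 2 ≤ d ∨ Finsupp.single k 2 ≤ d ∨ ee j + ee k ≤ d := by
  by_cases hi : 1 ≤ d i
  · exact Or.inl (single_le_iff'.mpr hi)
  by_cases hj2 : 2 ≤ d j
  · exact Or.inr (Or.inl (single_le_iff'.mpr hj2))
  by_cases hk2 : 2 ≤ d k
  · exact Or.inr (Or.inr (Or.inl (single_le_iff'.mpr hk2)))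
  by_cases hjk1 : 1 ≤ d j ∧ 1 ≤ d k
  · refine Or.inr (Or.inr (Or.inr ?_))
    rw [Finsupp.le_def]
    intro x
    rcases hcov x with rfl | rfl | rfl
    · rw [eejk_app_ne hij hik]; omega
    · rw [eejk_app_j hjk]; omega
    · rw [eejk_app_k hjk]; omega
  · exact absurd (complement_lemma hij hik hjk hcov (by omega) (by omega) (by omega) hjk1) hd


lemma eejk_le_of {i j k : Fin 3} (hij : i ≠ j) (hik : i ≠ k) (hjk : j ≠ k)
    (hcov : ∀ x : Fin 3, x = i ∨ x = j ∨ x = k) {d : Fin 3 →₀ ℕ}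
    (h1 : 1 ≤ d j) (h2 : 1 ≤ d k) : ee j + ee k ≤ d := by
  rw [Finsupp.le_def]
  intro x
  rcases hcov x with rfl | rfl | rfl
  · rw [eejk_app_ne hij hik]; omega
  · rw [eejk_app_j hjk]; omega
  · rw [eejk_app_k hjk]; omega

section descent
variable (P Q R : Fin 3 → ZMod 2) (m : MonomialOrder (Fin 3)) (G : Finset MP) (j k : Fin 3)

theorem GB_property (hjk : j ≠ k) (hg : Good P Q R j k)
    (hGI : ∀ g ∈ G, g ∈ Iv P Q R)
    (hlc : ∀ g ∈ G, leadCoeff m g = 1)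
    (hcomp : ∀ d : Fin 3 →₀ ℕ, ¬(d = 0 ∨ d = ee j ∨ d = ee k) → ∃ g ∈ G, leadMon m g ≤ d) :
    ∀ f ∈ Iv P Q R, f ≠ 0 → ∃ g ∈ G, leadMon m g ≤ leadMon m f := by
  classical
  have main : ∀ s : m.syn, ∀ f : MP,
      ((f.support.filter (fun d => ¬(d = 0 ∨ d = ee j ∨ d = ee k))).sup m.toSyn = s) →
      f ∈ Iv P Q R → f ≠ 0 → ∃ g ∈ G, leadMon m g ≤ leadMon m f := by
    intro s
    induction s using WellFoundedLT.induction with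
    | _ s IH =>
      intro f hs hf hne
      by_cases hL : leadMon m f = 0 ∨ leadMon m f = ee j ∨ leadMon m f = ee k
      swap
      · exact hcomp _ hL
      set bad := f.support.filter (fun d => ¬(d = 0 ∨ d = ee j ∨ d = ee k)) with hbaddef
      by_cases hbad : bad = ∅
      · exfalso
        apply hne
        apply std0 P Q R hjk hg hf
        intro d hd
        by_contra hdn
        have hmem : d ∈ bad := by
          refine Finset.mem_filter.mpr ⟨hd, ?_⟩
          simp only [Finset.mem_insert, Finset.mem_singleton] at hdn
          exact hdn
        rw [hbad] at hmem
        exact absurd hmem (Finset.notMem_empty d)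
      · obtain ⟨E, hEbad, hEsup⟩ :=
          Finset.exists_mem_eq_sup bad (Finset.nonempty_of_ne_empty hbad) m.toSyn
        obtain ⟨hEsupp, hEnstd⟩ := Finset.mem_filter.mp hEbad
        obtain ⟨g, hgG, hgle⟩ := hcomp E hEnstd
        have hEne0 : E ≠ 0 := fun h => hEnstd (Or.inl h)
        set μ := leadMon m g with hμdef
        set c := coeff E f with hcdef
        have hcne : c ≠ 0 := MvPolynomial.mem_support_iff.mp hEsupp
        set a := E - μ with hadef
        have haμ : a + μ = E := tsub_add_cancel_of_le hgle
        set h := monomial a c * g with hhdef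
        set f' := f - h with hf'def
        -- coefficient of the product at E
        have hcE : coeff E h = c := by
          rw [hhdef, ← haμ, coeff_monomial_mul]
          have h1 : coeff μ g = 1 := hlc g hgG
          rw [h1, mul_one]
        -- support bound for h
        have hsupph : ∀ d ∈ h.support, m.toSyn d ≤ m.toSyn E ∧ (d ≠ E → m.toSyn d < m.toSyn E) := by
          intro d hd
          have hcd : coeff d h ≠ 0 := MvPolynomial.mem_support_iff.mp hd
          rw [hhdef, coeff_monomial_mul'] at hcd
          by_cases had : a ≤ d
          · rw [if_pos had] at hcd
            have hda : d - a ∈ g.support := by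
              apply MvPolynomial.mem_support_iff.mpr
              intro h0
              rw [h0, mul_zero] at hcd
              exact hcd rfl
            have hle : m.toSyn (d - a) ≤ m.toSyn μ := le_leadMon m g hda
            have hdeq : (d - a) + a = d := tsub_add_cancel_of_le had
            have h1 : m.toSyn d ≤ m.toSyn E := by
              rw [← hdeq, ← haμ, map_add, map_add]
              rw [add_comm (m.toSyn a) (m.toSyn μ)]
              exact add_le_add_left hle _
            refine ⟨h1, fun hdne => ?_⟩
            rcases lt_or_eq_of_le h1 with h2 | h2
            · exact h2
            · exfalso
              apply hdne
              have : m.toSyn (d - a) + m.toSyn a = m.toSyn μ + m.toSyn a := by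
                rw [← map_add, ← map_add, hdeq, add_comm μ a, haμ]
                exact h2
              have h3 : (d - a) = μ := m.toSyn.injective (add_right_cancel this)
              rw [← hdeq, h3, add_comm μ a, haμ]
          · rw [if_neg had] at hcd
            exact absurd rfl hcd
        have hEltlead : m.toSyn E < m.toSyn (leadMon m f) := by
          have h1 : m.toSyn E ≤ m.toSyn (leadMon m f) := le_leadMon m f hEsupp
          rcases lt_or_eq_of_le h1 with h2 | h2
          · exact h2
          · exfalso
            have : E = leadMon m f := m.toSyn.injective h2
            rw [this] at hEnstd
            exact hEnstd hL
        -- f' facts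
        have hf'I : f' ∈ Iv P Q R := Submodule.sub_mem _ hf (Ideal.mul_mem_left _ _ (hGI g hgG))
        have hclead : coeff (leadMon m f) f' = coeff (leadMon m f) f := by
          rw [hf'def, MvPolynomial.coeff_sub]
          have : coeff (leadMon m f) h = 0 := by
            by_contra hc0
            have := (hsupph _ (MvPolynomial.mem_support_iff.mpr hc0)).1
            exact absurd (lt_of_lt_of_le hEltlead this) (lt_irrefl _)
          rw [this, sub_zero]
        have hleadne : coeff (leadMon m f) f ≠ 0 :=
          MvPolynomial.mem_support_iff.mp (leadMon_mem_support m f hne)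
        have hf'ne : f' ≠ 0 := by
          intro h0
          rw [h0] at hclead
          simp only [MvPolynomial.coeff_zero] at hclead
          exact hleadne hclead.symm
        have hsuppf' : f'.support ⊆ f.support ∪ h.support := by
          rw [hf'def]
          exact (MvPolynomial.support_sub _ _ _)
        have hleadf' : leadMon m f' = leadMon m f := by
          apply leadMon_eq_of
          · exact MvPolynomial.mem_support_iff.mpr (by rw [hclead]; exact hleadne)
          · intro d hd
            rcases Finset.mem_union.mp (hsuppf' hd) with hd1 | hd1
            · exact le_leadMon m f hd1
            · exact le_of_lt (lt_of_le_of_lt (hsupph d hd1).1 hEltlead)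
        -- new bad sup is smaller
        have hEnotf' : E ∉ f'.support := by
          apply MvPolynomial.notMem_support_iff.mpr
          rw [hf'def, MvPolynomial.coeff_sub, hcE, ← hcdef, sub_self]
        have hbadlt : (f'.support.filter (fun d => ¬(d = 0 ∨ d = ee j ∨ d = ee k))).sup m.toSyn
            < s := by
          have hslt : s = m.toSyn E := by rw [← hs, hbaddef, hEsup]
          rw [hslt]
          apply Finset.sup_lt_iff (by
            have : (0 : m.syn) < m.toSyn E := toSyn_pos m hEne0
            simpa using this) |>.mpr
          intro d hd
          obtain ⟨hdsupp, hdnstd⟩ := Finset.mem_filter.mp hd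
          have hdne : d ≠ E := fun he => hEnotf' (he ▸ hdsupp)
          rcases Finset.mem_union.mp (hsuppf' hdsupp) with hd1 | hd1
          · have : d ∈ bad := Finset.mem_filter.mpr ⟨hd1, hdnstd⟩
            have hle : m.toSyn d ≤ m.toSyn E := by
              rw [← hEsup]
              exact Finset.le_sup this
            rcases lt_or_eq_of_le hle with h2 | h2
            · exact h2
            · exact absurd (m.toSyn.injective h2) hdne
          · exact (hsupph d hd1).2 hdne
        obtain ⟨g', hg'G, hg'le⟩ := IH _ hbadlt f' rfl hf'I hf'ne
        rw [hleadf'] at hg'le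
        exact ⟨g', hg'G, hg'le⟩
  intro f hf hne
  exact main _ f rfl hf hne
end descent

-- new content
section EX
variable (P Q R : Fin 3 → ZMod 2)

noncomputable def aC (i j k : Fin 3) : ZMod 2 × ZMod 2 × ZMod 2 :=
  icoef (P j) (P k) (Q j) (Q k) (R j) (R k) (P i) (Q i) (R i)
noncomputable def bC (j k : Fin 3) : ZMod 2 × ZMod 2 × ZMod 2 :=
  icoef (P j) (P k) (Q j) (Q k) (R j) (R k) (P j * P k) (Q j * Q k) (R j * R k)
noncomputable def GBs (i j k : Fin 3) : Finset MP :=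
  {linp j k (ee i) (aC P Q R i j k), sqp j, sqp k, linp j k (ee j + ee k) (bC P Q R j k)}

lemma sqp_mem (t : Fin 3) : sqp t ∈ Iv P Q R :=
  (mem_Iv P Q R).mpr ⟨eval_sqp P t, eval_sqp Q t, eval_sqp R t⟩

lemma lin_i_mem {i j k : Fin 3} (hg : Good P Q R j k) :
    linp j k (ee i) (aC P Q R i j k) ∈ Iv P Q R := by
  obtain ⟨s1, s2, s3⟩ := icoef_spec (P j) (P k) (Q j) (Q k) (R j) (R k) (P i) (Q i) (R i)
    hg.1 hg.2.1 hg.2.2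
  rw [mem_Iv]
  refine ⟨?_, ?_, ?_⟩ <;> rw [eval_linp, prodpow_single, pow_one, aC]
  · rw [s1]; exact z2add _
  · rw [s2]; exact z2add _
  · rw [s3]; exact z2add _

lemma lin_jk_mem {j k : Fin 3} (hg : Good P Q R j k) :
    linp j k (ee j + ee k) (bC P Q R j k) ∈ Iv P Q R := by
  obtain ⟨s1, s2, s3⟩ := icoef_spec (P j) (P k) (Q j) (Q k) (R j) (R k) (P j * P k) (Q j * Q k)
    (R j * R k) hg.1 hg.2.1 hg.2.2
  rw [mem_Iv]
  refine ⟨?_, ?_, ?_⟩ <;> rw [eval_linp, prodpow_eejk, bC]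
  · rw [s1]; exact z2add _
  · rw [s2]; exact z2add _
  · rw [s3]; exact z2add _

theorem existsRGB (i j k : Fin 3) (hij : i ≠ j) (hik : i ≠ k) (hjk : j ≠ k)
    (hcov : ∀ x : Fin 3, x = i ∨ x = j ∨ x = k) (e : Fin 3 ≃ Fin 3)
    (hej : e i < e j) (hek : e i < e k) (hg : Good P Q R j k) :
    IsReducedGroebnerBasis (permLex e) (Iv P Q R) (GBs P Q R i j k) := by
  set m := permLex e with hmdef
  set A := linp j k (ee i) (aC P Q R i j k) with hA
  set B := sqp j with hB
  set C := sqp k with hC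
  set D := linp j k (ee j + ee k) (bC P Q R j k) with hD
  have hbjA : m.toSyn (ee j) ≤ m.toSyn (ee i) := le_of_lt (permLex_ee_lt e hej 1 1 one_pos)
  have hbkA : m.toSyn (ee k) ≤ m.toSyn (ee i) := le_of_lt (permLex_ee_lt e hek 1 1 one_pos)
  have hmA : leadMon m A = ee i :=
    leadMon_linp m j k _ _ (ee_ne_zero i) (ee_ne_ee hij) (ee_ne_ee hik) hbjA hbkA
  have hmB : leadMon m B = Finsupp.single j 2 := leadMon_sqp m j
  have hmC : leadMon m C = Finsupp.single k 2 := leadMon_sqp m k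
  have hmD : leadMon m D = ee j + ee k :=
    leadMon_linp m j k _ _ (eejk_ne_zero hjk) (eejk_ne_ee hjk j) (eejk_ne_ee hjk k)
      (m.toSyn_monotone (ee_le_eejk_l hjk)) (m.toSyn_monotone (ee_le_eejk_r hjk))
  have hcA : leadCoeff m A = 1 :=
    leadCoeff_linp m j k _ _ (ee_ne_zero i) (ee_ne_ee hij) (ee_ne_ee hik) hbjA hbkA
  have hcB : leadCoeff m B = 1 := leadCoeff_sqp m j
  have hcC : leadCoeff m C = 1 := leadCoeff_sqp m k
  have hcD : leadCoeff m D = 1 :=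
    leadCoeff_linp m j k _ _ (eejk_ne_zero hjk) (eejk_ne_ee hjk j) (eejk_ne_ee hjk k)
      (m.toSyn_monotone (ee_le_eejk_l hjk)) (m.toSyn_monotone (ee_le_eejk_r hjk))
  have hmemA : A ∈ GBs P Q R i j k := by rw [GBs]; exact Finset.mem_insert_self _ _
  have hmemB : B ∈ GBs P Q R i j k := by
    rw [GBs]; exact Finset.mem_insert_of_mem (Finset.mem_insert_self _ _)
  have hmemC : C ∈ GBs P Q R i j k := by
    rw [GBs]
    exact Finset.mem_insert_of_mem (Finset.mem_insert_of_mem (Finset.mem_insert_self _ _))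
  have hmemD : D ∈ GBs P Q R i j k := by
    rw [GBs]
    exact Finset.mem_insert_of_mem (Finset.mem_insert_of_mem (Finset.mem_insert_of_mem
      (Finset.mem_singleton_self _)))
  have hcases : ∀ g ∈ GBs P Q R i j k, g = A ∨ g = B ∨ g = C ∨ g = D := by
    intro g hgm
    rw [GBs] at hgm
    rcases Finset.mem_insert.mp hgm with h | h
    · exact Or.inl h
    rcases Finset.mem_insert.mp h with h | h
    · exact Or.inr (Or.inl h)
    rcases Finset.mem_insert.mp h with h | h
    · exact Or.inr (Or.inr (Or.inl h))
    · exact Or.inr (Or.inr (Or.inr (Finset.mem_singleton.mp h)))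
  have hlc : ∀ g ∈ GBs P Q R i j k, leadCoeff m g = 1 := by
    intro g hgm
    rcases hcases g hgm with rfl | rfl | rfl | rfl
    exacts [hcA, hcB, hcC, hcD]
  have hne : ∀ g ∈ GBs P Q R i j k, g ≠ 0 := by
    intro g hgm h0
    have := hlc g hgm
    rw [h0, leadCoeff] at this
    simp at this
  have hGI : ∀ g ∈ GBs P Q R i j k, g ∈ Iv P Q R := by
    intro g hgm
    rcases hcases g hgm with rfl | rfl | rfl | rfl
    exacts [lin_i_mem P Q R hg, sqp_mem P Q R j, sqp_mem P Q R k, lin_jk_mem P Q R hg]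
  have hcomp : ∀ d : Fin 3 →₀ ℕ, ¬(d = 0 ∨ d = ee j ∨ d = ee k) →
      ∃ g ∈ GBs P Q R i j k, leadMon m g ≤ d := by
    intro d hd
    rcases nonstd_div hij hik hjk hcov hd with h | h | h | h
    · exact ⟨A, hmemA, by rw [hmA]; exact h⟩
    · exact ⟨B, hmemB, by rw [hmB]; exact h⟩
    · exact ⟨C, hmemC, by rw [hmC]; exact h⟩
    · exact ⟨D, hmemD, by rw [hmD]; exact h⟩
  refine ⟨⟨hne, ?_, GB_property P Q R m _ j k hjk hg hGI hlc hcomp⟩, hlc, ?_⟩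
  · intro g hgm
    exact hGI g hgm
  · -- reducedness
    intro g hgm g' hg'm hne' d hd hled
    have hgc := hcases g hgm
    have hg'c := hcases g' hg'm
    -- value facts for support monomials
    rcases hgc with rfl | rfl | rfl | rfl
    · -- g = A, supp ⊆ {ee i, 0, ee j, ee k}
      have hdj : d j ≤ 1 ∧ d k ≤ 1 ∧ (d j = 0 ∨ d k = 0) := by
        rcases Finset.mem_insert.mp (supp_linp j k _ _ hd) with rfl | h2
        · rw [ee_app_ne (Ne.symm hij), ee_app_ne (Ne.symm hik)]; omega
        rcases Finset.mem_insert.mp h2 with rfl | h3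
        · simp
        rcases Finset.mem_insert.mp h3 with rfl | h4
        · rw [ee_app_self, ee_app_ne (Ne.symm hjk)]; omega
        · rw [Finset.mem_singleton.mp h4, ee_app_ne hjk, ee_app_self]; omega
      rcases hg'c with rfl | rfl | rfl | rfl
      · exact hne' rfl
      · rw [hmB] at hled; exact notle_single (by omega) hled
      · rw [hmC] at hled; exact notle_single (by omega) hled
      · rw [hmD] at hled; exact notle_eejk hjk hdj.2.2 hled
    · -- g = B = sqp j, supp ⊆ {2ej, ej}
      have hdv : d i = 0 ∧ d k = 0 := by
        rcases Finset.mem_insert.mp (supp_sqp j hd) with rfl | h2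
        · rw [sq_app_ne hij, sq_app_ne (Ne.symm hjk)]; omega
        · rw [Finset.mem_singleton.mp h2, ee_app_ne hij, ee_app_ne (Ne.symm hjk)]
          omega
      rcases hg'c with rfl | rfl | rfl | rfl
      · rw [hmA] at hled; exact notle_single (by omega) hled
      · exact hne' rfl
      · rw [hmC] at hled; exact notle_single (by omega) hled
      · rw [hmD] at hled; exact notle_eejk hjk (Or.inr hdv.2) hled
    · -- g = C = sqp k
      have hdv : d i = 0 ∧ d j = 0 := by
        rcases Finset.mem_insert.mp (supp_sqp k hd) with rfl | h2
        · rw [sq_app_ne hik, sq_app_ne hjk]; omega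
        · rw [Finset.mem_singleton.mp h2, ee_app_ne hik, ee_app_ne hjk]; omega
      rcases hg'c with rfl | rfl | rfl | rfl
      · rw [hmA] at hled; exact notle_single (by omega) hled
      · rw [hmB] at hled; exact notle_single (by omega) hled
      · exact hne' rfl
      · rw [hmD] at hled; exact notle_eejk hjk (Or.inl hdv.2) hled
    · -- g = D, supp ⊆ {ejk, 0, ej, ek}
      have hdv : d i = 0 ∧ d j ≤ 1 ∧ d k ≤ 1 := by
        rcases Finset.mem_insert.mp (supp_linp j k _ _ hd) with rfl | h2
        · rw [eejk_app_ne hij hik, eejk_app_j hjk, eejk_app_k hjk]; omega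
        rcases Finset.mem_insert.mp h2 with rfl | h3
        · simp
        rcases Finset.mem_insert.mp h3 with rfl | h4
        · rw [ee_app_ne hij, ee_app_self, ee_app_ne (Ne.symm hjk)]
          · omega
        · rw [Finset.mem_singleton.mp h4, ee_app_ne hik, ee_app_ne hjk, ee_app_self]
          omega
      rcases hg'c with rfl | rfl | rfl | rfl
      · rw [hmA] at hled; exact notle_single (by omega) hled
      · rw [hmB] at hled; exact notle_single (by omega) hled
      · rw [hmC] at hled; exact notle_single (by omega) hled
      · exact hne' rfl
end EX

-- NEW: quadruple monomial sums
noncomputable def quadp (d1 d2 d3 d4 : Fin 3 →₀ ℕ) (c1 c2 c3 c4 : ZMod 2) : MP :=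
  monomial d1 c1 + monomial d2 c2 + monomial d3 c3 + monomial d4 c4

lemma supp_quadp (d1 d2 d3 d4 : Fin 3 →₀ ℕ) (c1 c2 c3 c4 : ZMod 2) :
    (quadp d1 d2 d3 d4 c1 c2 c3 c4).support ⊆ {d1, d2, d3, d4} := by
  refine (MvPolynomial.support_add).trans (Finset.union_subset ((MvPolynomial.support_add).trans
    (Finset.union_subset ((MvPolynomial.support_add).trans
      (Finset.union_subset ?_ ?_)) ?_)) ?_) <;>
    refine (support_monomial_subset).trans (by simp)

lemma coeff_quadp (d1 d2 d3 d4 d : Fin 3 →₀ ℕ) (c1 c2 c3 c4 : ZMod 2) :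
    coeff d (quadp d1 d2 d3 d4 c1 c2 c3 c4) =
      (if d1 = d then c1 else 0) + (if d2 = d then c2 else 0) +
      (if d3 = d then c3 else 0) + (if d4 = d then c4 else 0) := by
  rw [quadp, coeff_add, coeff_add, coeff_add, coeff_monomial, coeff_monomial, coeff_monomial,
    coeff_monomial]

lemma eval_quadp (p : Fin 3 → ZMod 2) (d1 d2 d3 d4 : Fin 3 →₀ ℕ) (c1 c2 c3 c4 : ZMod 2) :
    eval p (quadp d1 d2 d3 d4 c1 c2 c3 c4) =
      c1 * d1.prod (fun i n => p i ^ n) + c2 * d2.prod (fun i n => p i ^ n) +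
      c3 * d3.prod (fun i n => p i ^ n) + c4 * d4.prod (fun i n => p i ^ n) := by
  rw [quadp, map_add, map_add, map_add, eval_monomial, eval_monomial, eval_monomial,
    eval_monomial]

lemma eval_two (f : MP) (l : Fin 3) (hsupp : f.support ⊆ {ee l, 0}) (p : Fin 3 → ZMod 2) :
    eval p f = coeff (ee l) f * p l + coeff 0 f := by
  rw [eval_eq_sum_of_subset f _ hsupp p,
    Finset.sum_insert (by simp only [Finset.mem_singleton]; exact ee_ne_zero l),
    Finset.sum_singleton, prodpow_single, prodpow_zero, pow_one, mul_one]

lemma eval_three (f : MP) (l t : Fin 3) (hlt : l ≠ t) (hsupp : f.support ⊆ {ee l, 0, ee t})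
    (p : Fin 3 → ZMod 2) :
    eval p f = coeff (ee l) f * p l + (coeff 0 f + coeff (ee t) f * p t) := by
  rw [eval_eq_sum_of_subset f _ hsupp p,
    Finset.sum_insert (by
      simp only [Finset.mem_insert, Finset.mem_singleton]
      push_neg
      exact ⟨ee_ne_zero l, ee_ne_ee hlt⟩),
    Finset.sum_insert (by simp only [Finset.mem_singleton]; exact (ee_ne_zero t).symm),
    Finset.sum_singleton, prodpow_single, prodpow_zero, prodpow_single, pow_one, pow_one,
    mul_one]



lemma quad_zero_coeffs {d1 d2 d3 d4 : Fin 3 →₀ ℕ}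
    (h12 : d1 ≠ d2) (h13 : d1 ≠ d3) (h14 : d1 ≠ d4) (h23 : d2 ≠ d3) (h24 : d2 ≠ d4)
    (h34 : d3 ≠ d4) {c1 c2 c3 c4 : ZMod 2} (h : quadp d1 d2 d3 d4 c1 c2 c3 c4 = 0) :
    c1 = 0 ∧ c2 = 0 ∧ c3 = 0 ∧ c4 = 0 := by
  have key : ∀ d : Fin 3 →₀ ℕ, coeff d (quadp d1 d2 d3 d4 c1 c2 c3 c4) = 0 := by
    intro d; rw [h]; exact MvPolynomial.coeff_zero d
  refine ⟨?_, ?_, ?_, ?_⟩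
  · have := key d1
    rw [coeff_quadp, if_pos rfl, if_neg (Ne.symm h12), if_neg (Ne.symm h13),
      if_neg (Ne.symm h14)] at this
    simpa using this
  · have := key d2
    rw [coeff_quadp, if_neg h12, if_pos rfl, if_neg (Ne.symm h23), if_neg (Ne.symm h24)] at this
    simpa using this
  · have := key d3
    rw [coeff_quadp, if_neg h13, if_neg h23, if_pos rfl, if_neg (Ne.symm h34)] at this
    simpa using this
  · have := key d4
    rw [coeff_quadp, if_neg h14, if_neg h24, if_neg h34, if_pos rfl] at this
    simpa using this

lemma trip_zero_coeffs {d1 d2 d3 : Fin 3 →₀ ℕ}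
    (h12 : d1 ≠ d2) (h13 : d1 ≠ d3) (h23 : d2 ≠ d3) {c1 c2 c3 : ZMod 2}
    (h : quadp d1 d2 d3 d1 c1 c2 c3 0 = 0) : c1 = 0 ∧ c2 = 0 ∧ c3 = 0 := by
  have key : ∀ d : Fin 3 →₀ ℕ, coeff d (quadp d1 d2 d3 d1 c1 c2 c3 0) = 0 := by
    intro d; rw [h]; exact MvPolynomial.coeff_zero d
  refine ⟨?_, ?_, ?_⟩
  · have := key d1
    rw [coeff_quadp, if_pos rfl, if_neg (Ne.symm h12), if_neg (Ne.symm h13), if_pos rfl] at this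
    simpa using this
  · have := key d2
    rw [coeff_quadp, if_neg h12, if_pos rfl, if_neg (Ne.symm h23), if_neg h12] at this
    simpa using this
  · have := key d3
    rw [coeff_quadp, if_neg h13, if_neg h23, if_pos rfl, if_neg h13] at this
    simpa using this

section UNIQ
variable (P Q R : Fin 3 → ZMod 2) (m : MonomialOrder (Fin 3)) (G : Finset MP)

lemma nL0 (hRGB : IsReducedGroebnerBasis m (Iv P Q R) G) :
    ¬ ∃ g ∈ G, leadMon m g ≤ 0 := by
  obtain ⟨⟨hne0, hsub, hgb⟩, hlc, hred⟩ := hRGB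
  rintro ⟨g, hgm, hle⟩
  have hlm : leadMon m g = 0 := le_antisymm hle zero_le
  have hsupp : g.support ⊆ {ee (0 : Fin 3), 0} := by
    intro d hd
    have h1 : m.toSyn d ≤ m.toSyn (leadMon m g) := le_leadMon m g hd
    rw [hlm, toSyn_zero_eq] at h1
    have h2 : m.toSyn d = 0 := le_antisymm h1 (by
      rw [← toSyn_zero_eq m]; exact m.toSyn_monotone zero_le)
    have : d = 0 := m.toSyn.injective (h2.trans (toSyn_zero_eq m).symm)
    simp [this]
  have hc1 : coeff 0 g = 1 := by
    have := hlc g hgm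
    rw [leadCoeff, hlm] at this
    exact this
  have hIg := (mem_Iv P Q R).mp (hsub hgm)
  have heval := eval_two g 0 hsupp P
  have hc0 : coeff (ee (0:Fin 3)) g = 0 := by
    by_contra hcc
    have hdm : ee (0:Fin 3) ∈ g.support := MvPolynomial.mem_support_iff.mpr hcc
    have h1 : m.toSyn (ee (0:Fin 3)) ≤ m.toSyn (leadMon m g) := le_leadMon m g hdm
    rw [hlm, toSyn_zero_eq] at h1
    have h2 : m.toSyn (ee (0:Fin 3)) = 0 := le_antisymm h1 (by
      rw [← toSyn_zero_eq m]; exact m.toSyn_monotone zero_le)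
    exact ee_ne_zero 0 (m.toSyn.injective (h2.trans (toSyn_zero_eq m).symm))
  rw [hc0, zero_mul, zero_add, hc1] at heval
  rw [heval] at hIg
  exact one_ne_zero hIg.1

lemma Lsq (hRGB : IsReducedGroebnerBasis m (Iv P Q R) G) (t : Fin 3) :
    ∃ g ∈ G, leadMon m g ≤ Finsupp.single t 2 := by
  obtain ⟨⟨hne0, hsub, hgb⟩, hlc, hred⟩ := hRGB
  have hsne : sqp t ≠ 0 := by
    intro h0
    have := coeff_sqp_lead t
    rw [h0] at this
    simp at this
  obtain ⟨g, hgm, hle⟩ := hgb (sqp t) (sqp_mem P Q R t) hsne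
  rw [leadMon_sqp] at hle
  exact ⟨g, hgm, hle⟩

lemma noI_lemma (hRGB : IsReducedGroebnerBasis m (Iv P Q R) G) :
    ∀ f : MP, f ∈ Iv P Q R →
      (∀ d ∈ f.support, ¬ ∃ g ∈ G, leadMon m g ≤ d) → f = 0 := by
  obtain ⟨⟨hne0, hsub, hgb⟩, hlc, hred⟩ := hRGB
  intro f hfI hstd
  by_contra hne
  obtain ⟨g, hgm, hle⟩ := hgb f hfI hne
  exact hstd _ (leadMon_mem_support m f hne) ⟨g, hgm, hle⟩

lemma bit_eq : ∀ a b c : ZMod 2, a + c = 0 → b + c = 0 → a = b := by decide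

theorem two_L_false (hPQ : P ≠ Q) (hPR : P ≠ R) (hQR : Q ≠ R)
    (hRGB : IsReducedGroebnerBasis m (Iv P Q R) G)
    {l1 l2 t : Fin 3} (h12 : l1 ≠ l2) (h1t : l1 ≠ t) (h2t : l2 ≠ t)
    (hcov : ∀ x : Fin 3, x = l2 ∨ x = l1 ∨ x = t)
    (hL1 : ∃ g ∈ G, leadMon m g ≤ ee l1) (hL2 : ∃ g ∈ G, leadMon m g ≤ ee l2) : False := by
  have hRGB' := hRGB
  obtain ⟨⟨hne0, hsub, hgb⟩, hlc, hred⟩ := hRGB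
  have hcov' : ∀ x : Fin 3, x = l1 ∨ x = l2 ∨ x = t := by
    intro x
    rcases hcov x with h | h | h
    · exact Or.inr (Or.inl h)
    · exact Or.inl h
    · exact Or.inr (Or.inr h)
  obtain ⟨g1, hg1m, hle1⟩ := hL1
  obtain ⟨g2, hg2m, hle2⟩ := hL2
  have hlm1 : leadMon m g1 = ee l1 := by
    rcases le_ee_iff l1 hle1 with h | h
    · exact absurd ⟨g1, hg1m, by rw [h]⟩ (nL0 P Q R m G hRGB')
    · exact h
  have hlm2 : leadMon m g2 = ee l2 := by
    rcases le_ee_iff l2 hle2 with h | h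
    · exact absurd ⟨g2, hg2m, by rw [h]⟩ (nL0 P Q R m G hRGB')
    · exact h
  have hg21 : g2 ≠ g1 := by
    intro he
    rw [he, hlm1] at hlm2
    exact ee_ne_ee h12 hlm2
  have hg12 : g1 ≠ g2 := fun he => hg21 he.symm
  have hc1 : coeff (ee l1) g1 = 1 := by
    have := hlc g1 hg1m
    rw [leadCoeff, hlm1] at this
    exact this
  have hc2 : coeff (ee l2) g2 = 1 := by
    have := hlc g2 hg2m
    rw [leadCoeff, hlm2] at this
    exact this
  have hI1 := (mem_Iv P Q R).mp (hsub hg1m)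
  have hI2 := (mem_Iv P Q R).mp (hsub hg2m)
  obtain ⟨g3, hg3m, hle3⟩ := Lsq P Q R m G hRGB' t
  rcases le_sq_iff t hle3 with h3 | h3 | h3
  · exact absurd ⟨g3, hg3m, by rw [h3]⟩ (nL0 P Q R m G hRGB')
  · -- leadMon g3 = ee t : all coordinates constant
    have hg31 : g3 ≠ g1 := by
      intro he
      rw [he, hlm1] at h3
      exact ee_ne_ee h1t h3
    have hg32 : g3 ≠ g2 := by
      intro he
      rw [he, hlm2] at h3
      exact ee_ne_ee h2t h3
    have hg13 : g1 ≠ g3 := fun he => hg31 he.symm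
    have hg23 : g2 ≠ g3 := fun he => hg32 he.symm
    have hc3 : coeff (ee t) g3 = 1 := by
      have := hlc g3 hg3m
      rw [leadCoeff, h3] at this
      exact this
    have hI3 := (mem_Iv P Q R).mp (hsub hg3m)
    have hzval : ∀ g ∈ G, ∀ g' ∈ G, g' ≠ g → ∀ l' : Fin 3, leadMon m g' = ee l' →
        ∀ d ∈ g.support, d l' = 0 := by
      intro g hgm g' hg'm hgg l' hlm' d hd
      have := hred g hgm g' hg'm hgg d hd
      rw [hlm'] at this
      have h4 : ¬ 1 ≤ d l' := fun hx => this (single_le_iff'.mpr hx)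
      omega
    have hpin : ∀ g : MP, g ∈ G → ∀ l a b : Fin 3, leadMon m g = ee l →
        (∀ x : Fin 3, x = a ∨ x = b ∨ x = l) →
        (∀ d ∈ g.support, d a = 0) → (∀ d ∈ g.support, d b = 0) →
        g.support ⊆ {ee l, 0} := by
      intro g hgm l a b hlm hcv hza hzb d hd
      have hb : m.toSyn d ≤ m.toSyn (ee l) := by
        rw [← hlm]; exact le_leadMon m g hd
      have hext : d = Finsupp.single l (d l) := by
        apply single_ext
        intro x hx
        rcases hcv x with rfl | rfl | rfl
        · exact hza d hd
        · exact hzb d hd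
        · exact absurd rfl hx
      rcases Nat.eq_zero_or_pos (d l) with h0 | h1
      · have : d = 0 := by rw [hext, h0]; simp
        simp [this]
      · have : d = ee l := eq_of_syn_le_of_le m hb (single_le_iff'.mpr h1)
        simp [this]
    have hs1 : g1.support ⊆ {ee l1, 0} := by
      refine hpin g1 hg1m l1 l2 t hlm1 (fun x => ?_)
        (hzval g1 hg1m g2 hg2m hg21 l2 hlm2) (hzval g1 hg1m g3 hg3m hg31 t h3)
      rcases hcov x with h | h | h
      · exact Or.inl h
      · exact Or.inr (Or.inr h)
      · exact Or.inr (Or.inl h)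
    have hs2 : g2.support ⊆ {ee l2, 0} := by
      refine hpin g2 hg2m l2 l1 t hlm2 (fun x => ?_)
        (hzval g2 hg2m g1 hg1m hg12 l1 hlm1) (hzval g2 hg2m g3 hg3m hg32 t h3)
      rcases hcov x with h | h | h
      · exact Or.inr (Or.inr h)
      · exact Or.inl h
      · exact Or.inr (Or.inl h)
    have hs3 : g3.support ⊆ {ee t, 0} := by
      refine hpin g3 hg3m t l1 l2 h3 (fun x => ?_)
        (hzval g3 hg3m g1 hg1m hg13 l1 hlm1) (hzval g3 hg3m g2 hg2m hg23 l2 hlm2)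
      rcases hcov x with h | h | h
      · exact Or.inr (Or.inl h)
      · exact Or.inl h
      · exact Or.inr (Or.inr h)
    have hconst : ∀ (g : MP) (l : Fin 3), g.support ⊆ {ee l, 0} → coeff (ee l) g = 1 →
        eval P g = 0 → eval Q g = 0 → eval R g = 0 → P l = Q l ∧ P l = R l := by
      intro g l hs hc eP eQ eR
      rw [eval_two g l hs P, hc, one_mul] at eP
      rw [eval_two g l hs Q, hc, one_mul] at eQ
      rw [eval_two g l hs R, hc, one_mul] at eR
      exact ⟨bit_eq _ _ _ eP eQ, bit_eq _ _ _ eP eR⟩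
    have e1 := hconst g1 l1 hs1 hc1 hI1.1 hI1.2.1 hI1.2.2
    have e2 := hconst g2 l2 hs2 hc2 hI2.1 hI2.2.1 hI2.2.2
    have e3 := hconst g3 t hs3 hc3 hI3.1 hI3.2.1 hI3.2.2
    apply hPQ
    funext x
    rcases hcov x with rfl | rfl | rfl
    · exact e2.1
    · exact e1.1
    · exact e3.1
  · -- leadMon g3 = single t 2
    have hg31 : g3 ≠ g1 := by
      intro he
      rw [he, hlm1] at h3
      exact sq_ne_ee t l1 h3.symm
    have hg32 : g3 ≠ g2 := by
      intro he
      rw [he, hlm2] at h3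
      exact sq_ne_ee t l2 h3.symm
    have hzval : ∀ g ∈ G, ∀ g' ∈ G, g' ≠ g → ∀ l' : Fin 3, leadMon m g' = ee l' →
        ∀ d ∈ g.support, d l' = 0 := by
      intro g hgm g' hg'm hgg l' hlm' d hd
      have := hred g hgm g' hg'm hgg d hd
      rw [hlm'] at this
      have h4 : ¬ 1 ≤ d l' := fun hx => this (single_le_iff'.mpr hx)
      omega
    have htle : ∀ g ∈ G, g ≠ g3 → ∀ d ∈ g.support, d t ≤ 1 := by
      intro g hgm hgg d hd
      have := hred g hgm g3 hg3m (fun he => hgg he.symm) d hd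
      rw [h3] at this
      have h4 : ¬ 2 ≤ d t := fun hx => this (single_le_iff'.mpr hx)
      omega
    have hpin3 : ∀ g : MP, g ∈ G → ∀ (l : Fin 3), l ≠ t → leadMon m g = ee l →
        (∀ x : Fin 3, x = l ∨ x = t → False) = False → -- dummy
        True := fun _ _ _ _ _ _ => trivial
    -- pin g1 : support ⊆ {ee l1, 0, ee t}
    have hs1 : g1.support ⊆ {ee l1, 0, ee t} := by
      intro d hd
      have hb : m.toSyn d ≤ m.toSyn (ee l1) := by
        rw [← hlm1]; exact le_leadMon m g1 hd
      have hd2 : d l2 = 0 := hzval g1 hg1m g2 hg2m hg21 l2 hlm2 d hd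
      have hdt : d t ≤ 1 := htle g1 hg1m (fun he => hg31 (he.symm)) d hd
      have hext : d = Finsupp.single l1 (d l1) + Finsupp.single t (d t) :=
        jk_ext h1t hcov hd2
      rcases Nat.eq_zero_or_pos (d l1) with h0 | h1p
      · rw [h0] at hext
        simp only [Finsupp.single_zero, zero_add] at hext
        have hcase : d t = 0 ∨ d t = 1 := by omega
        rcases hcase with h5 | h5
        · rw [h5] at hext
          simp only [Finsupp.single_zero] at hext
          simp [hext]
        · rw [h5] at hext
          simp [hext]
      · have : d = ee l1 := eq_of_syn_le_of_le m hb (single_le_iff'.mpr h1p)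
        simp [this]
    have hs2 : g2.support ⊆ {ee l2, 0, ee t} := by
      intro d hd
      have hb : m.toSyn d ≤ m.toSyn (ee l2) := by
        rw [← hlm2]; exact le_leadMon m g2 hd
      have hd1 : d l1 = 0 := hzval g2 hg2m g1 hg1m hg12 l1 hlm1 d hd
      have hdt : d t ≤ 1 := htle g2 hg2m (fun he => hg32 (he.symm)) d hd
      have hext : d = Finsupp.single l2 (d l2) + Finsupp.single t (d t) :=
        jk_ext h2t hcov' hd1
      rcases Nat.eq_zero_or_pos (d l2) with h0 | h1p
      · rw [h0] at hext
        simp only [Finsupp.single_zero, zero_add] at hext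
        have hcase : d t = 0 ∨ d t = 1 := by omega
        rcases hcase with h5 | h5
        · rw [h5] at hext
          simp only [Finsupp.single_zero] at hext
          simp [hext]
        · rw [h5] at hext
          simp [hext]
      · have : d = ee l2 := eq_of_syn_le_of_le m hb (single_le_iff'.mpr h1p)
        simp [this]
    have heval1 : ∀ p : Fin 3 → ZMod 2, eval p g1 =
        p l1 + (coeff 0 g1 + coeff (ee t) g1 * p t) := by
      intro p
      rw [eval_three g1 l1 t h1t hs1 p, hc1, one_mul]
    have heval2 : ∀ p : Fin 3 → ZMod 2, eval p g2 =
        p l2 + (coeff 0 g2 + coeff (ee t) g2 * p t) := by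
      intro p
      rw [eval_three g2 l2 t h2t hs2 p, hc2, one_mul]
    have hE1P := hI1.1; have hE1Q := hI1.2.1; have hE1R := hI1.2.2
    have hE2P := hI2.1; have hE2Q := hI2.2.1; have hE2R := hI2.2.2
    rw [heval1 P] at hE1P; rw [heval1 Q] at hE1Q; rw [heval1 R] at hE1R
    rw [heval2 P] at hE2P; rw [heval2 Q] at hE2Q; rw [heval2 R] at hE2R
    have hdifft : ∀ a b : Fin 3 → ZMod 2, a ≠ b →
        (a l1 + (coeff 0 g1 + coeff (ee t) g1 * a t) = 0) →
        (b l1 + (coeff 0 g1 + coeff (ee t) g1 * b t) = 0) →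
        (a l2 + (coeff 0 g2 + coeff (ee t) g2 * a t) = 0) →
        (b l2 + (coeff 0 g2 + coeff (ee t) g2 * b t) = 0) →
        a t ≠ b t := by
      intro a b hab ha1 hb1 ha2 hb2
      obtain ⟨x, hx⟩ := Function.ne_iff.mp hab
      rcases hcov x with rfl | rfl | rfl
      · exact diff_transfer _ _ _ _ _ _ ha2 hb2 hx
      · exact diff_transfer _ _ _ _ _ _ ha1 hb1 hx
      · exact hx
    exact three_distinct (P t) (Q t) (R t)
      (hdifft P Q hPQ hE1P hE1Q hE2P hE2Q)
      (hdifft P R hPR hE1P hE1R hE2P hE2R)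
      (hdifft Q R hQR hE1Q hE1R hE2Q hE2R)
end UNIQ

section PIN
variable (P Q R : Fin 3 → ZMod 2) (m : MonomialOrder (Fin 3)) (G : Finset MP)

theorem pinRGB (hPQ : P ≠ Q) (hPR : P ≠ R) (hQR : Q ≠ R)
    (hRGB : IsReducedGroebnerBasis m (Iv P Q R) G)
    {i j k : Fin 3} (hij : i ≠ j) (hik : i ≠ k) (hjk : j ≠ k)
    (hcov : ∀ x : Fin 3, x = i ∨ x = j ∨ x = k)
    (hnLj : ¬ ∃ g ∈ G, leadMon m g ≤ ee j) (hnLk : ¬ ∃ g ∈ G, leadMon m g ≤ ee k) :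
    Good P Q R j k ∧ G = GBs P Q R i j k := by
  have hRGB' := hRGB
  obtain ⟨⟨hne0, hsub, hgb⟩, hlc, hred⟩ := hRGB
  have hnL0 := nL0 P Q R m G hRGB'
  have noI := noI_lemma P Q R m G hRGB'
  -- L (ee i)
  have hLi : ∃ g ∈ G, leadMon m g ≤ ee i := by
    by_contra hnLi
    obtain ⟨c0, c1, c2, c3, hcne, e1, e2, e3⟩ :=
      kernel_lin4 (P j) (P k) (P i) (Q j) (Q k) (Q i) (R j) (R k) (R i)
    have hfI : quadp 0 (ee j) (ee k) (ee i) c0 c1 c2 c3 ∈ Iv P Q R := by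
      rw [mem_Iv]
      refine ⟨?_, ?_, ?_⟩ <;>
        rw [eval_quadp, prodpow_zero, prodpow_single, prodpow_single, prodpow_single,
          pow_one, pow_one, pow_one, mul_one]
      exacts [e1, e2, e3]
    have hf0 := noI _ hfI (by
      intro d hd
      have hmem := supp_quadp 0 (ee j) (ee k) (ee i) c0 c1 c2 c3 hd
      simp only [Finset.mem_insert, Finset.mem_singleton] at hmem
      rcases hmem with rfl | rfl | rfl | rfl
      exacts [hnL0, hnLj, hnLk, hnLi])
    exact hcne (quad_zero_coeffs (Ne.symm (ee_ne_zero j)) (Ne.symm (ee_ne_zero k))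
      (Ne.symm (ee_ne_zero i)) (ee_ne_ee hjk) (ee_ne_ee (Ne.symm hij))
      (ee_ne_ee (Ne.symm hik)) hf0)
  -- L (ee j + ee k)
  have hLjk : ∃ g ∈ G, leadMon m g ≤ ee j + ee k := by
    by_contra hnLjk
    obtain ⟨c0, c1, c2, c3, hcne, e1, e2, e3⟩ := kernel4 (P j) (P k) (Q j) (Q k) (R j) (R k)
    have hfI : quadp 0 (ee j) (ee k) (ee j + ee k) c0 c1 c2 c3 ∈ Iv P Q R := by
      rw [mem_Iv]
      refine ⟨?_, ?_, ?_⟩ <;>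
        rw [eval_quadp, prodpow_zero, prodpow_single, prodpow_single, prodpow_eejk,
          pow_one, pow_one, mul_one]
      exacts [e1, e2, e3]
    have hf0 := noI _ hfI (by
      intro d hd
      have hmem := supp_quadp 0 (ee j) (ee k) (ee j + ee k) c0 c1 c2 c3 hd
      simp only [Finset.mem_insert, Finset.mem_singleton] at hmem
      rcases hmem with rfl | rfl | rfl | rfl
      exacts [hnL0, hnLj, hnLk, hnLjk])
    exact hcne (quad_zero_coeffs (Ne.symm (ee_ne_zero j)) (Ne.symm (ee_ne_zero k))
      (Ne.symm (eejk_ne_zero hjk)) (ee_ne_ee hjk) (Ne.symm (eejk_ne_ee hjk j))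
      (Ne.symm (eejk_ne_ee hjk k)) hf0)
  -- Good
  have hgood : Good P Q R j k := by
    refine ⟨?_, ?_, ?_⟩
    · by_contra h
      push_neg at h
      obtain ⟨c0, c1, c2, hcne, e1, e2⟩ := kernel2 (P j) (P k) (R j) (R k)
      have hfI : quadp 0 (ee j) (ee k) 0 c0 c1 c2 0 ∈ Iv P Q R := by
        rw [mem_Iv]
        refine ⟨?_, ?_, ?_⟩ <;>
          rw [eval_quadp, prodpow_zero, prodpow_single, prodpow_single,
            pow_one, pow_one, mul_one, zero_mul, add_zero]
        · exact e1
        · rw [← h.1, ← h.2]; exact e1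
        · exact e2
      have hf0 := noI _ hfI (by
        intro d hd
        have hmem := supp_quadp 0 (ee j) (ee k) 0 c0 c1 c2 0 hd
        simp only [Finset.mem_insert, Finset.mem_singleton] at hmem
        rcases hmem with rfl | rfl | rfl | rfl
        exacts [hnL0, hnLj, hnLk, hnL0])
      obtain ⟨z0, z1, z2⟩ := trip_zero_coeffs (Ne.symm (ee_ne_zero j))
        (Ne.symm (ee_ne_zero k)) (ee_ne_ee hjk) hf0
      exact hcne ⟨z0, z1, z2⟩
    · by_contra h
      push_neg at h
      obtain ⟨c0, c1, c2, hcne, e1, e2⟩ := kernel2 (P j) (P k) (Q j) (Q k)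
      have hfI : quadp 0 (ee j) (ee k) 0 c0 c1 c2 0 ∈ Iv P Q R := by
        rw [mem_Iv]
        refine ⟨?_, ?_, ?_⟩ <;>
          rw [eval_quadp, prodpow_zero, prodpow_single, prodpow_single,
            pow_one, pow_one, mul_one, zero_mul, add_zero]
        · exact e1
        · exact e2
        · rw [← h.1, ← h.2]; exact e1
      have hf0 := noI _ hfI (by
        intro d hd
        have hmem := supp_quadp 0 (ee j) (ee k) 0 c0 c1 c2 0 hd
        simp only [Finset.mem_insert, Finset.mem_singleton] at hmem
        rcases hmem with rfl | rfl | rfl | rfl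
        exacts [hnL0, hnLj, hnLk, hnL0])
      obtain ⟨z0, z1, z2⟩ := trip_zero_coeffs (Ne.symm (ee_ne_zero j))
        (Ne.symm (ee_ne_zero k)) (ee_ne_ee hjk) hf0
      exact hcne ⟨z0, z1, z2⟩
    · by_contra h
      push_neg at h
      obtain ⟨c0, c1, c2, hcne, e1, e2⟩ := kernel2 (Q j) (Q k) (P j) (P k)
      have hfI : quadp 0 (ee j) (ee k) 0 c0 c1 c2 0 ∈ Iv P Q R := by
        rw [mem_Iv]
        refine ⟨?_, ?_, ?_⟩ <;>
          rw [eval_quadp, prodpow_zero, prodpow_single, prodpow_single,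
            pow_one, pow_one, mul_one, zero_mul, add_zero]
        · exact e2
        · exact e1
        · rw [← h.1, ← h.2]; exact e1
      have hf0 := noI _ hfI (by
        intro d hd
        have hmem := supp_quadp 0 (ee j) (ee k) 0 c0 c1 c2 0 hd
        simp only [Finset.mem_insert, Finset.mem_singleton] at hmem
        rcases hmem with rfl | rfl | rfl | rfl
        exacts [hnL0, hnLj, hnLk, hnL0])
      obtain ⟨z0, z1, z2⟩ := trip_zero_coeffs (Ne.symm (ee_ne_zero j))
        (Ne.symm (ee_ne_zero k)) (ee_ne_ee hjk) hf0
      exact hcne ⟨z0, z1, z2⟩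
  -- upward closure and classification
  have upward : ∀ μ d : Fin 3 →₀ ℕ, (∃ g ∈ G, leadMon m g ≤ μ) → μ ≤ d →
      ∃ g ∈ G, leadMon m g ≤ d := by
    rintro μ d ⟨g, hg, hle⟩ hμd
    exact ⟨g, hg, hle.trans hμd⟩
  have hstd_iff : ∀ d : Fin 3 →₀ ℕ,
      (¬ ∃ g ∈ G, leadMon m g ≤ d) ↔ (d = 0 ∨ d = ee j ∨ d = ee k) := by
    intro d
    constructor
    · intro hnL
      by_contra hstd
      rcases nonstd_div hij hik hjk hcov hstd with h | h | h | h
      · exact hnL (upward _ _ hLi h)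
      · exact hnL (upward _ _ (Lsq P Q R m G hRGB' j) h)
      · exact hnL (upward _ _ (Lsq P Q R m G hRGB' k) h)
      · exact hnL (upward _ _ hLjk h)
    · rintro (rfl | rfl | rfl)
      exacts [hnL0, hnLj, hnLk]
  have hclass : ∀ g ∈ G, leadMon m g = ee i ∨ leadMon m g = Finsupp.single j 2 ∨
      leadMon m g = Finsupp.single k 2 ∨ leadMon m g = ee j + ee k := by
    intro g hgm
    apply mingen_lemma hij hik hjk hcov
    · intro d' hle hne
      rw [← hstd_iff]
      rintro ⟨g', hg'm, hle'⟩
      by_cases hgg : g' = g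
      · subst hgg
        exact hne (le_antisymm hle hle')
      · exact hred g hgm g' hg'm hgg (leadMon m g)
          (leadMon_mem_support m g (hne0 g hgm)) (hle'.trans hle)
    · exact fun hstd => ((hstd_iff _).mpr hstd) ⟨g, hgm, le_refl _⟩
  -- attainment
  have hattA : ∃ g ∈ G, leadMon m g = ee i := by
    obtain ⟨g, hgm, hle⟩ := hLi
    rcases le_ee_iff i hle with h | h
    · exact absurd ⟨g, hgm, by rw [h]⟩ hnL0
    · exact ⟨g, hgm, h⟩
  have hattB : ∃ g ∈ G, leadMon m g = Finsupp.single j 2 := by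
    obtain ⟨g, hgm, hle⟩ := Lsq P Q R m G hRGB' j
    rcases le_sq_iff j hle with h | h | h
    · exact absurd ⟨g, hgm, by rw [h]⟩ hnL0
    · exact absurd ⟨g, hgm, by rw [h]⟩ hnLj
    · exact ⟨g, hgm, h⟩
  have hattC : ∃ g ∈ G, leadMon m g = Finsupp.single k 2 := by
    obtain ⟨g, hgm, hle⟩ := Lsq P Q R m G hRGB' k
    rcases le_sq_iff k hle with h | h | h
    · exact absurd ⟨g, hgm, by rw [h]⟩ hnL0
    · exact absurd ⟨g, hgm, by rw [h]⟩ hnLk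
    · exact ⟨g, hgm, h⟩
  have hattD : ∃ g ∈ G, leadMon m g = ee j + ee k := by
    obtain ⟨g, hgm, hle⟩ := hLjk
    rcases le_eejk_iff hij hik hjk hcov hle with h | h | h | h
    · exact absurd ⟨g, hgm, by rw [h]⟩ hnL0
    · exact absurd ⟨g, hgm, by rw [h]⟩ hnLj
    · exact absurd ⟨g, hgm, by rw [h]⟩ hnLk
    · exact ⟨g, hgm, h⟩
  obtain ⟨gB, hgBm, hlmB⟩ := hattB
  obtain ⟨gC, hgCm, hlmC⟩ := hattC
  obtain ⟨gD, hgDm, hlmD⟩ := hattD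
  obtain ⟨gA, hgAm, hlmA⟩ := hattA
  -- value bounds from reducedness
  have hvb : ∀ g ∈ G, ∀ g' ∈ G, g' ≠ g → ∀ t : Fin 3, ∀ n : ℕ,
      leadMon m g' = Finsupp.single t n → ∀ d ∈ g.support, d t < n := by
    intro g hgm g' hg'm hgg t n hlm' d hd
    have := hred g hgm g' hg'm hgg d hd
    rw [hlm'] at this
    have h4 : ¬ n ≤ d t := fun hx => this (single_le_iff'.mpr hx)
    omega
  have hvD : ∀ g ∈ G, g ≠ gD → ∀ d ∈ g.support, ¬(1 ≤ d j ∧ 1 ≤ d k) := by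
    intro g hgm hgg d hd hb
    have := hred g hgm gD hgDm (fun he => hgg he.symm) d hd
    rw [hlmD] at this
    exact this (eejk_le_of hij hik hjk hcov hb.1 hb.2)
  -- pinning lemmas
  have hpinA : ∀ g ∈ G, leadMon m g = ee i → g = linp j k (ee i) (aC P Q R i j k) := by
    intro g hgm hlm
    have hneB : gB ≠ g := fun he => sq_ne_ee j i (by rw [← hlmB, he]; exact hlm)
    have hneC : gC ≠ g := fun he => sq_ne_ee k i (by rw [← hlmC, he]; exact hlm)
    have hneD : gD ≠ g := fun he => eejk_ne_ee hjk i (by rw [← hlmD, he]; exact hlm)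
    have hsupp : g.support ⊆ {ee i, 0, ee j, ee k} := by
      intro d hd
      have hb : m.toSyn d ≤ m.toSyn (ee i) := by rw [← hlm]; exact le_leadMon m g hd
      have hdj : d j < 2 := hvb g hgm gB hgBm hneB j 2 hlmB d hd
      have hdk : d k < 2 := hvb g hgm gC hgCm hneC k 2 hlmC d hd
      have hnb : ¬(1 ≤ d j ∧ 1 ≤ d k) := hvD g hgm (fun he => hneD he.symm) d hd
      rcases Nat.eq_zero_or_pos (d i) with h0 | h1
      · rcases complement_lemma hij hik hjk hcov h0 (by omega) (by omega) hnb with rfl | h | h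
        · simp
        · simp [h]
        · simp [h]
      · have : d = ee i := eq_of_syn_le_of_le m hb (single_le_iff'.mpr h1)
        simp [this]
    have hlin : linp j k (ee i) (aC P Q R i j k) ∈ Iv P Q R := lin_i_mem P Q R hgood
    have hcg : coeff (ee i) g = 1 := by
      have := hlc g hgm; rw [leadCoeff, hlm] at this; exact this
    have hclin : coeff (ee i) (linp j k (ee i) (aC P Q R i j k)) = 1 :=
      coeff_linp_lead j k _ _ (ee_ne_zero i) (ee_ne_ee hij) (ee_ne_ee hik)
    have hrI : g - linp j k (ee i) (aC P Q R i j k) ∈ Iv P Q R :=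
      Submodule.sub_mem _ (hsub hgm) hlin
    have hrsupp : (g - linp j k (ee i) (aC P Q R i j k)).support ⊆ {0, ee j, ee k} := by
      intro d hd
      have hdne : d ≠ ee i := by
        intro he
        subst he
        have hcd : coeff (ee i) (g - linp j k (ee i) (aC P Q R i j k)) ≠ 0 :=
          MvPolynomial.mem_support_iff.mp hd
        rw [MvPolynomial.coeff_sub, hcg, hclin, sub_self] at hcd
        exact hcd rfl
      have hdu := MvPolynomial.support_sub _ g (linp j k (ee i) (aC P Q R i j k)) hd
      rcases Finset.mem_union.mp hdu with h | h
      · rcases Finset.mem_insert.mp (hsupp h) with h' | h'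
        · exact absurd h' hdne
        · exact h'
      · rcases Finset.mem_insert.mp (supp_linp j k (ee i) (aC P Q R i j k) h) with h' | h'
        · exact absurd h' hdne
        · exact h'
    exact sub_eq_zero.mp (std0 P Q R hjk hgood hrI hrsupp)
  have hpinB : ∀ g ∈ G, leadMon m g = Finsupp.single j 2 → g = sqp j := by
    intro g hgm hlm
    have hneA : gA ≠ g := fun he => (sq_ne_ee j i).symm (by rw [← hlmA, he]; exact hlm)
    have hneC : gC ≠ g := fun he => sq_ne_sq (Ne.symm hjk) (by rw [← hlmC, he]; exact hlm)
    have hneD : gD ≠ g := fun he => eejk_ne_sq hjk j (by rw [← hlmD, he]; exact hlm)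
    have hsupp : g.support ⊆ {Finsupp.single j 2, 0, ee j, ee k} := by
      intro d hd
      have hb : m.toSyn d ≤ m.toSyn (Finsupp.single j 2) := by
        rw [← hlm]; exact le_leadMon m g hd
      have hdi : d i < 1 := hvb g hgm gA hgAm hneA i 1 hlmA d hd
      have hdk : d k < 2 := hvb g hgm gC hgCm hneC k 2 hlmC d hd
      have hnb : ¬(1 ≤ d j ∧ 1 ≤ d k) := hvD g hgm (fun he => hneD he.symm) d hd
      by_cases hdj : 2 ≤ d j
      · have : d = Finsupp.single j 2 := eq_of_syn_le_of_le m hb (single_le_iff'.mpr hdj)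
        simp [this]
      · rcases complement_lemma hij hik hjk hcov (by omega) (by omega) (by omega) hnb
          with rfl | h | h
        · simp
        · simp [h]
        · simp [h]
    have hsq : sqp j ∈ Iv P Q R := sqp_mem P Q R j
    have hcg : coeff (Finsupp.single j 2) g = 1 := by
      have := hlc g hgm; rw [leadCoeff, hlm] at this; exact this
    have hrI : g - sqp j ∈ Iv P Q R := Submodule.sub_mem _ (hsub hgm) hsq
    have hrsupp : (g - sqp j).support ⊆ {0, ee j, ee k} := by
      intro d hd
      have hdne : d ≠ Finsupp.single j 2 := by
        intro he
        subst he
        have hcd : coeff (Finsupp.single j 2) (g - sqp j) ≠ 0 :=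
          MvPolynomial.mem_support_iff.mp hd
        rw [MvPolynomial.coeff_sub, hcg, coeff_sqp_lead, sub_self] at hcd
        exact hcd rfl
      have hdu := MvPolynomial.support_sub _ g (sqp j) hd
      rcases Finset.mem_union.mp hdu with h | h
      · rcases Finset.mem_insert.mp (hsupp h) with h' | h'
        · exact absurd h' hdne
        · exact h'
      · rcases Finset.mem_insert.mp (supp_sqp j h) with h' | h'
        · exact absurd h' hdne
        · rw [Finset.mem_singleton.mp h']
          simp
    exact sub_eq_zero.mp (std0 P Q R hjk hgood hrI hrsupp)
  have hpinC : ∀ g ∈ G, leadMon m g = Finsupp.single k 2 → g = sqp k := by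
    intro g hgm hlm
    have hneA : gA ≠ g := fun he => (sq_ne_ee k i).symm (by rw [← hlmA, he]; exact hlm)
    have hneB : gB ≠ g := fun he => sq_ne_sq hjk (by rw [← hlmB, he]; exact hlm)
    have hneD : gD ≠ g := fun he => eejk_ne_sq hjk k (by rw [← hlmD, he]; exact hlm)
    have hsupp : g.support ⊆ {Finsupp.single k 2, 0, ee j, ee k} := by
      intro d hd
      have hb : m.toSyn d ≤ m.toSyn (Finsupp.single k 2) := by
        rw [← hlm]; exact le_leadMon m g hd
      have hdi : d i < 1 := hvb g hgm gA hgAm hneA i 1 hlmA d hd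
      have hdj : d j < 2 := hvb g hgm gB hgBm hneB j 2 hlmB d hd
      have hnb : ¬(1 ≤ d j ∧ 1 ≤ d k) := hvD g hgm (fun he => hneD he.symm) d hd
      by_cases hdk : 2 ≤ d k
      · have : d = Finsupp.single k 2 := eq_of_syn_le_of_le m hb (single_le_iff'.mpr hdk)
        simp [this]
      · rcases complement_lemma hij hik hjk hcov (by omega) (by omega) (by omega) hnb
          with rfl | h | h
        · simp
        · simp [h]
        · simp [h]
    have hsq : sqp k ∈ Iv P Q R := sqp_mem P Q R k
    have hcg : coeff (Finsupp.single k 2) g = 1 := by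
      have := hlc g hgm; rw [leadCoeff, hlm] at this; exact this
    have hrI : g - sqp k ∈ Iv P Q R := Submodule.sub_mem _ (hsub hgm) hsq
    have hrsupp : (g - sqp k).support ⊆ {0, ee j, ee k} := by
      intro d hd
      have hdne : d ≠ Finsupp.single k 2 := by
        intro he
        subst he
        have hcd : coeff (Finsupp.single k 2) (g - sqp k) ≠ 0 :=
          MvPolynomial.mem_support_iff.mp hd
        rw [MvPolynomial.coeff_sub, hcg, coeff_sqp_lead, sub_self] at hcd
        exact hcd rfl
      have hdu := MvPolynomial.support_sub _ g (sqp k) hd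
      rcases Finset.mem_union.mp hdu with h | h
      · rcases Finset.mem_insert.mp (hsupp h) with h' | h'
        · exact absurd h' hdne
        · exact h'
      · rcases Finset.mem_insert.mp (supp_sqp k h) with h' | h'
        · exact absurd h' hdne
        · rw [Finset.mem_singleton.mp h']
          simp
    exact sub_eq_zero.mp (std0 P Q R hjk hgood hrI hrsupp)
  have hpinD : ∀ g ∈ G, leadMon m g = ee j + ee k →
      g = linp j k (ee j + ee k) (bC P Q R j k) := by
    intro g hgm hlm
    have hneA : gA ≠ g := fun he => (eejk_ne_ee hjk i).symm (by rw [← hlmA, he]; exact hlm)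
    have hneB : gB ≠ g := fun he => (eejk_ne_sq hjk j).symm (by rw [← hlmB, he]; exact hlm)
    have hneC : gC ≠ g := fun he => (eejk_ne_sq hjk k).symm (by rw [← hlmC, he]; exact hlm)
    have hsupp : g.support ⊆ {ee j + ee k, 0, ee j, ee k} := by
      intro d hd
      have hb : m.toSyn d ≤ m.toSyn (ee j + ee k) := by
        rw [← hlm]; exact le_leadMon m g hd
      have hdi : d i < 1 := hvb g hgm gA hgAm hneA i 1 hlmA d hd
      have hdj : d j < 2 := hvb g hgm gB hgBm hneB j 2 hlmB d hd
      have hdk : d k < 2 := hvb g hgm gC hgCm hneC k 2 hlmC d hd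
      by_cases hbb : 1 ≤ d j ∧ 1 ≤ d k
      · have : d = ee j + ee k :=
          eq_of_syn_le_of_le m hb (eejk_le_of hij hik hjk hcov hbb.1 hbb.2)
        simp [this]
      · rcases complement_lemma hij hik hjk hcov (by omega) (by omega) (by omega) hbb
          with rfl | h | h
        · simp
        · simp [h]
        · simp [h]
    have hlin : linp j k (ee j + ee k) (bC P Q R j k) ∈ Iv P Q R := lin_jk_mem P Q R hgood
    have hcg : coeff (ee j + ee k) g = 1 := by
      have := hlc g hgm; rw [leadCoeff, hlm] at this; exact this
    have hclin : coeff (ee j + ee k) (linp j k (ee j + ee k) (bC P Q R j k)) = 1 :=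
      coeff_linp_lead j k _ _ (eejk_ne_zero hjk) (eejk_ne_ee hjk j) (eejk_ne_ee hjk k)
    have hrI : g - linp j k (ee j + ee k) (bC P Q R j k) ∈ Iv P Q R :=
      Submodule.sub_mem _ (hsub hgm) hlin
    have hrsupp : (g - linp j k (ee j + ee k) (bC P Q R j k)).support ⊆ {0, ee j, ee k} := by
      intro d hd
      have hdne : d ≠ ee j + ee k := by
        intro he
        subst he
        have hcd : coeff (ee j + ee k) (g - linp j k (ee j + ee k) (bC P Q R j k)) ≠ 0 :=
          MvPolynomial.mem_support_iff.mp hd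
        rw [MvPolynomial.coeff_sub, hcg, hclin, sub_self] at hcd
        exact hcd rfl
      have hdu := MvPolynomial.support_sub _ g (linp j k (ee j + ee k) (bC P Q R j k)) hd
      rcases Finset.mem_union.mp hdu with h | h
      · rcases Finset.mem_insert.mp (hsupp h) with h' | h'
        · exact absurd h' hdne
        · exact h'
      · rcases Finset.mem_insert.mp (supp_linp j k (ee j + ee k) (bC P Q R j k) h) with h' | h'
        · exact absurd h' hdne
        · exact h'
    exact sub_eq_zero.mp (std0 P Q R hjk hgood hrI hrsupp)
  refine ⟨hgood, ?_⟩
  apply Finset.Subset.antisymm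
  · intro g hgm
    rw [GBs]
    rcases hclass g hgm with h | h | h | h
    · rw [hpinA g hgm h]; exact Finset.mem_insert_self _ _
    · rw [hpinB g hgm h]; exact Finset.mem_insert_of_mem (Finset.mem_insert_self _ _)
    · rw [hpinC g hgm h]
      exact Finset.mem_insert_of_mem (Finset.mem_insert_of_mem (Finset.mem_insert_self _ _))
    · rw [hpinD g hgm h]
      exact Finset.mem_insert_of_mem (Finset.mem_insert_of_mem (Finset.mem_insert_of_mem
        (Finset.mem_singleton_self _)))
  · intro g hgm
    rw [GBs] at hgm
    rcases Finset.mem_insert.mp hgm with h | h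
    · rw [h, ← hpinA gA hgAm hlmA]; exact hgAm
    rcases Finset.mem_insert.mp h with h | h
    · rw [h, ← hpinB gB hgBm hlmB]; exact hgBm
    rcases Finset.mem_insert.mp h with h | h
    · rw [h, ← hpinC gC hgCm hlmC]; exact hgCm
    · rw [Finset.mem_singleton.mp h, ← hpinD gD hgDm hlmD]; exact hgDm
end PIN

section FINAL
variable (P Q R : Fin 3 → ZMod 2) (m : MonomialOrder (Fin 3)) (G : Finset MP)

theorem uniqueRGB (hPQ : P ≠ Q) (hPR : P ≠ R) (hQR : Q ≠ R)
    (hRGB : IsReducedGroebnerBasis m (Iv P Q R) G) :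
    (Good P Q R 1 2 ∧ G = GBs P Q R 0 1 2) ∨ (Good P Q R 0 2 ∧ G = GBs P Q R 1 0 2) ∨
      (Good P Q R 0 1 ∧ G = GBs P Q R 2 0 1) := by
  classical
  by_cases h0 : ∃ g ∈ G, leadMon m g ≤ ee 0
  · by_cases h1 : ∃ g ∈ G, leadMon m g ≤ ee 1
    · exact absurd (two_L_false P Q R m G hPQ hPR hQR hRGB (l1 := 0) (l2 := 1) (t := 2)
        (by decide) (by decide) (by decide) (by decide) h0 h1) not_false
    · by_cases h2 : ∃ g ∈ G, leadMon m g ≤ ee 2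
      · exact absurd (two_L_false P Q R m G hPQ hPR hQR hRGB (l1 := 0) (l2 := 2) (t := 1)
          (by decide) (by decide) (by decide) (by decide) h0 h2) not_false
      · exact Or.inl (pinRGB P Q R m G hPQ hPR hQR hRGB (i := 0) (j := 1) (k := 2)
          (by decide) (by decide) (by decide) (by decide) h1 h2)
  · by_cases h1 : ∃ g ∈ G, leadMon m g ≤ ee 1
    · by_cases h2 : ∃ g ∈ G, leadMon m g ≤ ee 2
      · exact absurd (two_L_false P Q R m G hPQ hPR hQR hRGB (l1 := 1) (l2 := 2) (t := 0)
          (by decide) (by decide) (by decide) (by decide) h1 h2) not_false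
      · exact Or.inr (Or.inl (pinRGB P Q R m G hPQ hPR hQR hRGB (i := 1) (j := 0) (k := 2)
          (by decide) (by decide) (by decide) (by decide) h0 h2))
    · by_cases h2 : ∃ g ∈ G, leadMon m g ≤ ee 2
      · exact Or.inr (Or.inr (pinRGB P Q R m G hPQ hPR hQR hRGB (i := 2) (j := 0) (k := 1)
          (by decide) (by decide) (by decide) (by decide) h0 h1))
      · exact Or.inl (pinRGB P Q R m G hPQ hPR hQR hRGB (i := 0) (j := 1) (k := 2)
          (by decide) (by decide) (by decide) (by decide) h1 h2)
end FINAL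


-- distinctness of the candidate bases
lemma coeff_zero_of {f : MP} {s : Finset (Fin 3 →₀ ℕ)} (hsupp : f.support ⊆ s)
    {d : Fin 3 →₀ ℕ} (hd : d ∉ s) : coeff d f = 0 := by
  by_contra h
  exact hd (hsupp (MvPolynomial.mem_support_iff.mpr h))

lemma sq_notin_GBs (P Q R : Fin 3 → ZMod 2) (t i j k : Fin 3) (htj : t ≠ j) (htk : t ≠ k)
    (hjk : j ≠ k) : sqp t ∉ GBs P Q R i j k := by
  intro hmem
  have hc : coeff (Finsupp.single t 2) (sqp t) = 1 := coeff_sqp_lead t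
  rw [GBs] at hmem
  rcases Finset.mem_insert.mp hmem with h | h
  · rw [h] at hc
    rw [coeff_zero_of (supp_linp j k (ee i) (aC P Q R i j k)) (by
      simp only [Finset.mem_insert, Finset.mem_singleton]
      push_neg
      exact ⟨sq_ne_ee t i, sq_ne_zero t, sq_ne_ee t j, sq_ne_ee t k⟩)] at hc
    exact one_ne_zero hc.symm
  rcases Finset.mem_insert.mp h with h | h
  · rw [h] at hc
    rw [coeff_zero_of (supp_sqp j) (by
      simp only [Finset.mem_insert, Finset.mem_singleton]
      push_neg
      exact ⟨sq_ne_sq htj, sq_ne_ee t j⟩)] at hc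
    exact one_ne_zero hc.symm
  rcases Finset.mem_insert.mp h with h | h
  · rw [h] at hc
    rw [coeff_zero_of (supp_sqp k) (by
      simp only [Finset.mem_insert, Finset.mem_singleton]
      push_neg
      exact ⟨sq_ne_sq htk, sq_ne_ee t k⟩)] at hc
    exact one_ne_zero hc.symm
  · rw [Finset.mem_singleton.mp h] at hc
    rw [coeff_zero_of (supp_linp j k (ee j + ee k) (bC P Q R j k)) (by
      simp only [Finset.mem_insert, Finset.mem_singleton]
      push_neg
      exact ⟨(eejk_ne_sq hjk t).symm, sq_ne_zero t, sq_ne_ee t j, sq_ne_ee t k⟩)] at hc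
    exact one_ne_zero hc.symm

lemma sq_in_GBs (P Q R : Fin 3 → ZMod 2) (i j k : Fin 3) :
    sqp j ∈ GBs P Q R i j k := by
  rw [GBs]
  exact Finset.mem_insert_of_mem (Finset.mem_insert_self _ _)

lemma sq_in_GBs' (P Q R : Fin 3 → ZMod 2) (i j k : Fin 3) :
    sqp k ∈ GBs P Q R i j k := by
  rw [GBs]
  exact Finset.mem_insert_of_mem (Finset.mem_insert_of_mem (Finset.mem_insert_self _ _))

lemma GBs_ne12 (P Q R : Fin 3 → ZMod 2) : GBs P Q R 0 1 2 ≠ GBs P Q R 1 0 2 := by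
  intro he
  have h1 : sqp 1 ∈ GBs P Q R 0 1 2 := sq_in_GBs P Q R 0 1 2
  rw [he] at h1
  exact sq_notin_GBs P Q R 1 1 0 2 (by decide) (by decide) (by decide) h1

lemma GBs_ne13 (P Q R : Fin 3 → ZMod 2) : GBs P Q R 0 1 2 ≠ GBs P Q R 2 0 1 := by
  intro he
  have h1 : sqp 2 ∈ GBs P Q R 0 1 2 := sq_in_GBs' P Q R 0 1 2
  rw [he] at h1
  exact sq_notin_GBs P Q R 2 2 0 1 (by decide) (by decide) (by decide) h1

lemma GBs_ne23 (P Q R : Fin 3 → ZMod 2) : GBs P Q R 1 0 2 ≠ GBs P Q R 2 0 1 := by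
  intro he
  have h1 : sqp 2 ∈ GBs P Q R 1 0 2 := sq_in_GBs' P Q R 1 0 2
  rw [he] at h1
  exact sq_notin_GBs P Q R 2 2 0 1 (by decide) (by decide) (by decide) h1

instance (P Q R : Fin 3 → ZMod 2) (j k : Fin 3) : Decidable (Good P Q R j k) :=
  inferInstanceAs (Decidable ((_ ≠ _ ∨ _ ≠ _) ∧ (_ ≠ _ ∨ _ ≠ _) ∧ (_ ≠ _ ∨ _ ≠ _)))

set_option maxHeartbeats 4000000 in
lemma arith_main : ∀ P Q R : Fin 3 → ZMod 2, P ≠ Q → P ≠ R → Q ≠ R →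
    ((if Good P Q R 1 2 then 1 else 0) + (if Good P Q R 0 2 then 1 else 0) +
      (if Good P Q R 0 1 then 1 else 0) : ℕ) =
    3 - ((if (Finset.univ.filter fun i : Fin 3 => P i ≠ Q i).card = 1 then 1 else 0) +
         (if (Finset.univ.filter fun i : Fin 3 => P i ≠ R i).card = 1 then 1 else 0) +
         (if (Finset.univ.filter fun i : Fin 3 => Q i ≠ R i).card = 1 then 1 else 0)) := by
  decide

/-- For three pairwise-distinct points of `(ZMod 2)^3`, the number of distinct reduced
Gröbner bases of their vanishing ideal equals `3 - #{i : wᵢ = 1}`, where `w₁, w₂, w₃`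
are the numbers of coordinates in which the pairs `(P,Q)`, `(P,R)`, `(Q,R)` differ. -/

theorem num_reduced_GB_three_points_Z2_n3 (P Q R : Fin 3 → ZMod 2)
    (hPQ : P ≠ Q) (hPR : P ≠ R) (hQR : Q ≠ R) :
    numReducedGB (vanishingIdeal (ZMod 2) ({P, Q, R} : Set (Fin 3 → ZMod 2))) =
      3 - ((if (Finset.univ.filter fun i : Fin 3 => P i ≠ Q i).card = 1 then 1 else 0) +
           (if (Finset.univ.filter fun i : Fin 3 => P i ≠ R i).card = 1 then 1 else 0) +
           (if (Finset.univ.filter fun i : Fin 3 => Q i ≠ R i).card = 1 then 1 else 0)) := by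

  classical
  rw [← arith_main P Q R hPQ hPR hQR]
  have hex1 : Good P Q R 1 2 → ∃ m : MonomialOrder.{0,0} (Fin 3),
      IsReducedGroebnerBasis m (Iv P Q R) (GBs P Q R 0 1 2) := fun hg =>
    ⟨permLex (Equiv.refl _), existsRGB P Q R 0 1 2 (by decide) (by decide) (by decide)
      (by decide) (Equiv.refl _) (by decide) (by decide) hg⟩
  have hex2 : Good P Q R 0 2 → ∃ m : MonomialOrder.{0,0} (Fin 3),
      IsReducedGroebnerBasis m (Iv P Q R) (GBs P Q R 1 0 2) := fun hg =>
    ⟨permLex (Equiv.swap 0 1), existsRGB P Q R 1 0 2 (by decide) (by decide) (by decide)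
      (by decide) (Equiv.swap 0 1) (by decide) (by decide) hg⟩
  have hex3 : Good P Q R 0 1 → ∃ m : MonomialOrder.{0,0} (Fin 3),
      IsReducedGroebnerBasis m (Iv P Q R) (GBs P Q R 2 0 1) := fun hg =>
    ⟨permLex (Equiv.swap 0 2), existsRGB P Q R 2 0 1 (by decide) (by decide) (by decide)
      (by decide) (Equiv.swap 0 2) (by decide) (by decide) hg⟩
  have hIdeq : vanishingIdeal (ZMod 2) ({P, Q, R} : Set (Fin 3 → ZMod 2)) = Iv P Q R := rfl
  have hnum : numReducedGB (vanishingIdeal (ZMod 2) ({P, Q, R} : Set (Fin 3 → ZMod 2))) =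
      Set.ncard {G : Finset MP |
        ∃ m : MonomialOrder.{0,0} (Fin 3), IsReducedGroebnerBasis m (Iv P Q R) G} := rfl
  rw [hnum]
  have huniq : ∀ (G : Finset MP), (∃ m : MonomialOrder.{0,0} (Fin 3),
      IsReducedGroebnerBasis m (Iv P Q R) G) →
      (Good P Q R 1 2 ∧ G = GBs P Q R 0 1 2) ∨ (Good P Q R 0 2 ∧ G = GBs P Q R 1 0 2) ∨
        (Good P Q R 0 1 ∧ G = GBs P Q R 2 0 1) := by
    rintro G ⟨m, hm⟩
    exact uniqueRGB P Q R m G hPQ hPR hQR hm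
  by_cases g12 : Good P Q R 1 2 <;> by_cases g02 : Good P Q R 0 2 <;>
    by_cases g01 : Good P Q R 0 1
  · rw [if_pos g12, if_pos g02, if_pos g01]
    have hS : {G : Finset MP | ∃ m : MonomialOrder.{0,0} (Fin 3),
        IsReducedGroebnerBasis m (Iv P Q R) G} =
        {GBs P Q R 0 1 2, GBs P Q R 1 0 2, GBs P Q R 2 0 1} := by
      ext G
      constructor
      · intro hG
        rcases huniq G hG with ⟨_, rfl⟩ | ⟨_, rfl⟩ | ⟨_, rfl⟩ <;> simp
      · intro hG
        rcases hG with rfl | rfl | rfl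
        exacts [hex1 g12, hex2 g02, hex3 g01]
    rw [hS, Set.ncard_insert_of_notMem (by
        simp only [Set.mem_insert_iff, Set.mem_singleton_iff]
        push_neg
        exact ⟨GBs_ne12 P Q R, GBs_ne13 P Q R⟩),
      Set.ncard_pair (GBs_ne23 P Q R)]
  · rw [if_pos g12, if_pos g02, if_neg g01]
    have hS : {G : Finset MP | ∃ m : MonomialOrder.{0,0} (Fin 3),
        IsReducedGroebnerBasis m (Iv P Q R) G} =
        {GBs P Q R 0 1 2, GBs P Q R 1 0 2} := by
      ext G
      constructor
      · intro hG
        rcases huniq G hG with ⟨_, rfl⟩ | ⟨_, rfl⟩ | ⟨hg, rfl⟩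
        · simp
        · simp
        · exact absurd hg g01
      · intro hG
        rcases hG with rfl | rfl
        exacts [hex1 g12, hex2 g02]
    rw [hS, Set.ncard_pair (GBs_ne12 P Q R)]
  · rw [if_pos g12, if_neg g02, if_pos g01]
    have hS : {G : Finset MP | ∃ m : MonomialOrder.{0,0} (Fin 3),
        IsReducedGroebnerBasis m (Iv P Q R) G} =
        {GBs P Q R 0 1 2, GBs P Q R 2 0 1} := by
      ext G
      constructor
      · intro hG
        rcases huniq G hG with ⟨_, rfl⟩ | ⟨hg, rfl⟩ | ⟨_, rfl⟩
        · simp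
        · exact absurd hg g02
        · simp
      · intro hG
        rcases hG with rfl | rfl
        exacts [hex1 g12, hex3 g01]
    rw [hS, Set.ncard_pair (GBs_ne13 P Q R)]
  · rw [if_pos g12, if_neg g02, if_neg g01]
    have hS : {G : Finset MP | ∃ m : MonomialOrder.{0,0} (Fin 3),
        IsReducedGroebnerBasis m (Iv P Q R) G} = {GBs P Q R 0 1 2} := by
      ext G
      constructor
      · intro hG
        rcases huniq G hG with ⟨_, rfl⟩ | ⟨hg, rfl⟩ | ⟨hg, rfl⟩
        · simp
        · exact absurd hg g02
        · exact absurd hg g01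
      · intro hG
        rcases hG with rfl
        exact hex1 g12
    rw [hS, Set.ncard_singleton]
  · rw [if_neg g12, if_pos g02, if_pos g01]
    have hS : {G : Finset MP | ∃ m : MonomialOrder.{0,0} (Fin 3),
        IsReducedGroebnerBasis m (Iv P Q R) G} =
        {GBs P Q R 1 0 2, GBs P Q R 2 0 1} := by
      ext G
      constructor
      · intro hG
        rcases huniq G hG with ⟨hg, rfl⟩ | ⟨_, rfl⟩ | ⟨_, rfl⟩
        · exact absurd hg g12
        · simp
        · simp
      · intro hG
        rcases hG with rfl | rfl
        exacts [hex2 g02, hex3 g01]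
    rw [hS, Set.ncard_pair (GBs_ne23 P Q R)]
  · rw [if_neg g12, if_pos g02, if_neg g01]
    have hS : {G : Finset MP | ∃ m : MonomialOrder.{0,0} (Fin 3),
        IsReducedGroebnerBasis m (Iv P Q R) G} = {GBs P Q R 1 0 2} := by
      ext G
      constructor
      · intro hG
        rcases huniq G hG with ⟨hg, rfl⟩ | ⟨_, rfl⟩ | ⟨hg, rfl⟩
        · exact absurd hg g12
        · simp
        · exact absurd hg g01
      · intro hG
        rcases hG with rfl
        exact hex2 g02
    rw [hS, Set.ncard_singleton]
  · rw [if_neg g12, if_neg g02, if_pos g01]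
    have hS : {G : Finset MP | ∃ m : MonomialOrder.{0,0} (Fin 3),
        IsReducedGroebnerBasis m (Iv P Q R) G} = {GBs P Q R 2 0 1} := by
      ext G
      constructor
      · intro hG
        rcases huniq G hG with ⟨hg, rfl⟩ | ⟨hg, rfl⟩ | ⟨_, rfl⟩
        · exact absurd hg g12
        · exact absurd hg g02
        · simp
      · intro hG
        rcases hG with rfl
        exact hex3 g01
    rw [hS, Set.ncard_singleton]
  · rw [if_neg g12, if_neg g02, if_neg g01]
    have hS : {G : Finset MP | ∃ m : MonomialOrder.{0,0} (Fin 3),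
        IsReducedGroebnerBasis m (Iv P Q R) G} = ∅ := by
      ext G
      constructor
      · intro hG
        rcases huniq G hG with ⟨hg, _⟩ | ⟨hg, _⟩ | ⟨hg, _⟩
        · exact absurd hg g12
        · exact absurd hg g02
        · exact absurd hg g01
      · intro hG
        exact absurd hG (Set.notMem_empty G)
    rw [hS, Set.ncard_empty]
end

section
/- Let K be a field, n ≥ 1, and let P, Q ∈ (Fin n → K) be two distinct points. Then the vanishing ideal I({P, Q}) ⊆ MvPolynomial (Fin n) K equals the ideal generated by the n² products (X i − C (P i)) · (X j − C (Q j)) for i, j ∈ Fin n. -/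
open MvPolynomial Pointwise

lemma sub_C_eval_mem_span {K : Type} [CommRing K] {n : ℕ} (a : Fin n → K)
    (f : MvPolynomial (Fin n) K) :
    f - C (eval a f) ∈ Ideal.span (Set.range fun i => (X i - C (a i) : MvPolynomial (Fin n) K)) := by
  induction f using MvPolynomial.induction_on with
  | C c => simp
  | add p q hp hq =>
    have : p + q - C (eval a (p + q)) = (p - C (eval a p)) + (q - C (eval a q)) := by
      rw [map_add, map_add]; ring
    rw [this]; exact Ideal.add_mem _ hp hq
  | mul_X p i hp =>
    have : p * X i - C (eval a (p * X i)) =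
        p * (X i - C (a i)) + C (a i) * (p - C (eval a p)) := by
      rw [map_mul, eval_X, map_mul]; ring
    rw [this]
    exact Ideal.add_mem _ (Ideal.mul_mem_left _ _ (Ideal.subset_span ⟨i, rfl⟩))
      (Ideal.mul_mem_left _ _ hp)

lemma vanishingIdeal_singleton_eq {K : Type} [Field K] {n : ℕ} (a : Fin n → K) :
    vanishingIdeal K ({a} : Set (Fin n → K)) =
      Ideal.span (Set.range fun i => (X i - C (a i) : MvPolynomial (Fin n) K)) := by
  apply le_antisymm
  · intro f hf
    have h0 : eval a f = 0 := (mem_vanishingIdeal_singleton_iff a f).mp hf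
    have := sub_C_eval_mem_span a f
    rwa [h0, map_zero, sub_zero] at this
  · rw [Ideal.span_le]
    rintro _ ⟨i, rfl⟩
    rw [SetLike.mem_coe, mem_vanishingIdeal_singleton_iff]
    simp

/-- The vanishing ideal of two distinct points `P, Q` of `K^n` is generated by the `n²`
products `(X i - C (P i)) * (X j - C (Q j))` for `i, j : Fin n`. -/
theorem vanishingIdeal_two_points_eq_span (K : Type) [Field K] (n : ℕ) (hn : 1 ≤ n)
    (P Q : Fin n → K) (hPQ : P ≠ Q) :
    vanishingIdeal K ({P, Q} : Set (Fin n → K)) =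
      Ideal.span {f : MvPolynomial (Fin n) K |
        ∃ i j : Fin n, f = (X i - C (P i)) * (X j - C (Q j))} := by
  obtain ⟨k, hk⟩ : ∃ k, P k ≠ Q k := Function.ne_iff.mp hPQ
  set IP := Ideal.span (Set.range fun i => (X i - C (P i) : MvPolynomial (Fin n) K))
  set IQ := Ideal.span (Set.range fun i => (X i - C (Q i) : MvPolynomial (Fin n) K))
  have hgen : {f : MvPolynomial (Fin n) K |
      ∃ i j : Fin n, f = (X i - C (P i)) * (X j - C (Q j))} =
      (Set.range fun i => (X i - C (P i) : MvPolynomial (Fin n) K)) *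
        (Set.range fun i => (X i - C (Q i) : MvPolynomial (Fin n) K)) := by
    ext f
    constructor
    · rintro ⟨i, j, rfl⟩
      exact Set.mul_mem_mul ⟨i, rfl⟩ ⟨j, rfl⟩
    · rintro ⟨_, ⟨i, rfl⟩, _, ⟨j, rfl⟩, rfl⟩
      exact ⟨i, j, rfl⟩
  rw [hgen, ← Ideal.span_mul_span']
  have hcop : IP ⊔ IQ = ⊤ := by
    rw [Ideal.eq_top_iff_one]
    have h1 : (X k - C (P k) : MvPolynomial (Fin n) K) ∈ IP ⊔ IQ :=
      Ideal.mem_sup_left (Ideal.subset_span ⟨k, rfl⟩)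
    have h2 : (X k - C (Q k) : MvPolynomial (Fin n) K) ∈ IP ⊔ IQ :=
      Ideal.mem_sup_right (Ideal.subset_span ⟨k, rfl⟩)
    have h3 : (C ((Q k - P k)⁻¹) : MvPolynomial (Fin n) K) *
        ((X k - C (P k)) - (X k - C (Q k))) ∈ IP ⊔ IQ :=
      Ideal.mul_mem_left _ _ (Ideal.sub_mem _ h1 h2)
    have : (C ((Q k - P k)⁻¹) : MvPolynomial (Fin n) K) *
        ((X k - C (P k)) - (X k - C (Q k))) = 1 := by
      have : (X k - C (P k) : MvPolynomial (Fin n) K) - (X k - C (Q k)) = C (Q k - P k) := by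
        rw [map_sub]; ring
      rw [this, ← map_mul, inv_mul_cancel₀ (sub_ne_zero.mpr (Ne.symm hk)), map_one]
    rwa [this] at h3
  rw [Ideal.mul_eq_inf_of_coprime hcop]
  have : ({P, Q} : Set (Fin n → K)) = {P} ∪ {Q} := rfl
  rw [this]
  have hIPQ : IP ⊓ IQ = vanishingIdeal K ({P} : Set (Fin n → K)) ⊓
      vanishingIdeal K ({Q} : Set (Fin n → K)) := by
    rw [vanishingIdeal_singleton_eq, vanishingIdeal_singleton_eq]
  rw [hIPQ]
  ext f
  simp [mem_vanishingIdeal_iff, Submodule.mem_inf]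
  tauto
end

section
/- Let p be a prime, n ≥ 1, K = ZMod p, and let S ⊆ (Fin n → K) be a subset with exactly pⁿ − 1 elements. Then the vanishing ideal I(S) has exactly one reduced Gröbner basis, i.e., its reduced Gröbner basis is the same for every monomial order. -/
set_option maxHeartbeats 1000000
set_option linter.unusedSectionVars false


open MvPolynomial

namespace AuxGB

variable {n : ℕ} {K : Type*} [Field K] (m : MonomialOrder (Fin n))

lemma toSyn_leadMon (f : MvPolynomial (Fin n) K) :
    m.toSyn (leadMon m f) = f.support.sup (fun d => m.toSyn d) := by
  rw [leadMon, AddEquiv.apply_symm_apply]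

lemma leadMon_mem {f : MvPolynomial (Fin n) K} (hf : f ≠ 0) : leadMon m f ∈ f.support := by
  obtain ⟨d, hd, hds⟩ := Finset.exists_mem_eq_sup f.support
    (MvPolynomial.support_nonempty.2 hf) (fun d => m.toSyn d)
  rw [leadMon, hds, AddEquiv.symm_apply_apply]
  exact hd

lemma le_leadMon {f : MvPolynomial (Fin n) K} {d : Fin n →₀ ℕ} (hd : d ∈ f.support) :
    m.toSyn d ≤ m.toSyn (leadMon m f) := by
  rw [toSyn_leadMon]
  exact Finset.le_sup hd

lemma lt_leadMon {f : MvPolynomial (Fin n) K} {d : Fin n →₀ ℕ} (hd : d ∈ f.support)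
    (hne : d ≠ leadMon m f) : m.toSyn d < m.toSyn (leadMon m f) :=
  lt_of_le_of_ne (le_leadMon m hd) (fun h => hne (m.toSyn.injective h))

lemma leadMon_eq {f : MvPolynomial (Fin n) K} {D : Fin n →₀ ℕ} (hD : D ∈ f.support)
    (h : ∀ d ∈ f.support, m.toSyn d ≤ m.toSyn D) : leadMon m f = D := by
  have : f.support.sup (fun d => m.toSyn d) = m.toSyn D :=
    le_antisymm (Finset.sup_le h) (Finset.le_sup hD)
  rw [leadMon, this, AddEquiv.symm_apply_apply]






lemma binom_expand (i : Fin n) (c : K) (k : ℕ) :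
    (X i + C c) ^ k =
      ∑ j ∈ Finset.range (k + 1), monomial (Finsupp.single i j) ((k.choose j : K) * c ^ (k - j)) := by
  rw [add_pow]
  refine Finset.sum_congr rfl fun j hj => ?_
  rw [X_pow_eq_monomial, ← C_pow, ← C_eq_coe_nat, C_apply, C_apply, monomial_mul, monomial_mul]
  simp [mul_comm, mul_left_comm]

lemma coeff_mul_of_bounds {f g : MvPolynomial (Fin n) K} {D E : Fin n →₀ ℕ}
    (hf : ∀ d ∈ f.support, d ≤ D) (hg : ∀ d ∈ g.support, d ≤ E) :
    coeff (D + E) (f * g) = coeff D f * coeff E g := by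
  rw [coeff_mul]
  apply Finset.sum_eq_single (D, E)
  · rintro ⟨b₁, b₂⟩ hb hbne
    rw [Finset.HasAntidiagonal.mem_antidiagonal] at hb
    by_cases h1 : coeff b₁ f = 0
    · rw [h1, zero_mul]
    by_cases h2 : coeff b₂ g = 0
    · rw [h2, mul_zero]
    exfalso
    have hb1 : b₁ ≤ D := hf _ (MvPolynomial.mem_support_iff.2 h1)
    have hb2 : b₂ ≤ E := hg _ (MvPolynomial.mem_support_iff.2 h2)
    have e1 : b₁ = D := by
      ext j
      have := DFunLike.congr_fun hb j
      simp only [Finsupp.add_apply] at this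
      have := hb1 j; have := hb2 j
      omega
    have e2 : b₂ = E := by
      ext j
      have := DFunLike.congr_fun hb j
      simp only [Finsupp.add_apply] at this
      have := hb1 j; have := hb2 j
      omega
    exact hbne (by rw [e1, e2])
  · intro h
    simp at h

lemma support_mul_of_bounds {f g : MvPolynomial (Fin n) K} {D E : Fin n →₀ ℕ}
    (hf : ∀ d ∈ f.support, d ≤ D) (hg : ∀ d ∈ g.support, d ≤ E) :
    ∀ d ∈ (f * g).support, d ≤ D + E := by
  intro d hd
  rw [MvPolynomial.mem_support_iff, coeff_mul] at hd
  obtain ⟨⟨b₁, b₂⟩, hmem, hne⟩ := Finset.exists_ne_zero_of_sum_ne_zero hd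
  rw [Finset.HasAntidiagonal.mem_antidiagonal] at hmem
  have h1 : coeff b₁ f ≠ 0 := fun h => hne (by rw [h, zero_mul])
  have h2 : coeff b₂ g ≠ 0 := fun h => hne (by rw [h, mul_zero])
  calc d = b₁ + b₂ := hmem.symm
  _ ≤ D + E := add_le_add (hf _ (MvPolynomial.mem_support_iff.2 h1))
      (hg _ (MvPolynomial.mem_support_iff.2 h2))

lemma prod_bounds (q : Fin n → MvPolynomial (Fin n) K) (D : Fin n → (Fin n →₀ ℕ))
    (h : ∀ i, ∀ d ∈ (q i).support, d ≤ D i) (s : Finset (Fin n)) :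
    (∀ d ∈ (∏ i ∈ s, q i).support, d ≤ ∑ i ∈ s, D i) ∧
      coeff (∑ i ∈ s, D i) (∏ i ∈ s, q i) = ∏ i ∈ s, coeff (D i) (q i) := by
  induction s using Finset.induction with
  | empty =>
    constructor
    · intro d hd
      simp only [Finset.prod_empty] at hd
      have : d = 0 := by
        by_contra hne
        rw [MvPolynomial.mem_support_iff, MvPolynomial.coeff_one, if_neg (Ne.symm hne)] at hd
        exact hd rfl
      simp [this]
    · simp
  | insert _ _ hx ih =>
    rename_i a s'
    obtain ⟨ih1, ih2⟩ := ih
    rw [Finset.prod_insert hx, Finset.prod_insert hx, Finset.sum_insert hx]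
    exact ⟨support_mul_of_bounds (h a) ih1,
      by rw [coeff_mul_of_bounds (h a) ih1, ih2]⟩






lemma single_le_single {i : Fin n} {j k : ℕ} (h : j ≤ k) :
    Finsupp.single i j ≤ Finsupp.single i k := by
  rw [Finsupp.le_def]
  intro x
  classical
  rw [Finsupp.single_apply, Finsupp.single_apply]
  split <;> simp [h]

section P

variable (p : ℕ) [hp : Fact p.Prime]

/-- exponent vector (p-1, ..., p-1) -/
noncomputable def T (n : ℕ) : Fin n →₀ ℕ := ∑ i : Fin n, Finsupp.single i (p - 1)

lemma T_apply (j : Fin n) : T p n j = p - 1 := by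
  classical
  rw [T, Finset.sum_apply']
  rw [Finset.sum_eq_single j (fun i _ hij => Finsupp.single_eq_of_ne' hij)
    (fun h => absurd (Finset.mem_univ j) h)]
  exact Finsupp.single_eq_same

variable {p}

lemma qpoly_facts (i : Fin n) (c : ZMod p) :
    (∀ d ∈ ((X i - C c) ^ (p - 1) - 1 : MvPolynomial (Fin n) (ZMod p)).support,
      d ≤ Finsupp.single i (p - 1)) ∧
    coeff (Finsupp.single i (p - 1)) ((X i - C c) ^ (p - 1) - 1 : MvPolynomial (Fin n) (ZMod p))
      = 1 := by
  classical
  have hp2 : 2 ≤ p := hp.out.two_le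
  have hexp : (X i - C c) ^ (p - 1) =
      ∑ j ∈ Finset.range (p - 1 + 1),
        monomial (Finsupp.single i j) (((p-1).choose j : ZMod p) * (-c) ^ (p - 1 - j)) := by
    rw [sub_eq_add_neg, ← C_neg, binom_expand]
  have hcoeff : ∀ d : Fin n →₀ ℕ,
      coeff d ((X i - C c) ^ (p - 1) - 1 : MvPolynomial (Fin n) (ZMod p)) =
      (∑ j ∈ Finset.range (p - 1 + 1),
        if Finsupp.single i j = d then (((p-1).choose j : ZMod p) * (-c) ^ (p - 1 - j)) else 0)
        - (if 0 = d then 1 else 0) := by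
    intro d
    rw [coeff_sub, hexp, coeff_sum, coeff_one]
    congr 1
    exact Finset.sum_congr rfl fun j _ => coeff_monomial _ _ _
  constructor
  · intro d hd
    rw [MvPolynomial.mem_support_iff, hcoeff] at hd
    by_cases h0 : (0 : Fin n →₀ ℕ) = d
    · exact h0 ▸ zero_le
    by_cases hsing : ∃ j ∈ Finset.range (p - 1 + 1), Finsupp.single i j = d
    · obtain ⟨j, hj, rfl⟩ := hsing
      exact single_le_single (by simpa using Nat.lt_succ_iff.mp (Finset.mem_range.1 hj))
    · exfalso
      apply hd
      rw [if_neg h0, sub_zero]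
      refine Finset.sum_eq_zero fun j hj => if_neg fun h => hsing ⟨j, hj, h⟩
  · rw [hcoeff]
    have h1 : Finsupp.single i (p - 1) ≠ (0 : Fin n →₀ ℕ) := by
      rw [Ne, Finsupp.single_eq_zero]
      omega
    rw [if_neg (Ne.symm h1), sub_zero]
    rw [Finset.sum_eq_single (p - 1)]
    · simp
    · intro j hj hne
      refine if_neg fun h => hne ?_
      have := DFunLike.congr_fun h i
      simpa [Finsupp.single_eq_same] using this
    · intro h
      exact absurd (Finset.self_mem_range_succ _) h

end P

section P2

variable (p : ℕ) [hp : Fact p.Prime]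

/-- the monic "all points but `a`" polynomial -/
noncomputable def dlt (a : Fin n → ZMod p) : MvPolynomial (Fin n) (ZMod p) :=
  ∏ i : Fin n, ((X i - C (a i)) ^ (p - 1) - 1)

/-- the field polynomial -/
noncomputable def gP (i : Fin n) : MvPolynomial (Fin n) (ZMod p) := X i ^ p - X i

variable {p}

lemma dlt_support (a : Fin n → ZMod p) : ∀ d ∈ (dlt p a).support, d ≤ T p n :=
  (prod_bounds _ (fun i => Finsupp.single i (p - 1))
    (fun i => (qpoly_facts i (a i)).1) Finset.univ).1

lemma dlt_coeff_T (a : Fin n → ZMod p) : coeff (T p n) (dlt p a) = 1 := by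
  rw [T, dlt, (prod_bounds _ (fun i => Finsupp.single i (p - 1))
    (fun i => (qpoly_facts i (a i)).1) Finset.univ).2]
  exact Finset.prod_eq_one fun i _ => (qpoly_facts i (a i)).2

lemma dlt_ne_zero (a : Fin n → ZMod p) : dlt p a ≠ 0 := fun h => by
  have := dlt_coeff_T a
  rw [h, coeff_zero] at this
  exact (one_ne_zero : (1 : ZMod p) ≠ 0) this.symm

lemma T_mem_support (a : Fin n → ZMod p) : T p n ∈ (dlt p a).support :=
  MvPolynomial.mem_support_iff.2 (by rw [dlt_coeff_T]; exact (one_ne_zero : (1 : ZMod p) ≠ 0))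

lemma dlt_leadMon (m : MonomialOrder (Fin n)) (a : Fin n → ZMod p) :
    leadMon m (dlt p a) = T p n :=
  leadMon_eq m (T_mem_support a) (fun d hd => m.toSyn_monotone (dlt_support a d hd))

lemma dlt_leadCoeff (m : MonomialOrder (Fin n)) (a : Fin n → ZMod p) :
    leadCoeff m (dlt p a) = 1 := by
  rw [leadCoeff, dlt_leadMon m a, dlt_coeff_T]

lemma dlt_eval_ne (a s : Fin n → ZMod p) (h : s ≠ a) : eval s (dlt p a) = 0 := by
  obtain ⟨i, hi⟩ : ∃ i, s i ≠ a i := by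
    by_contra hc
    push_neg at hc
    exact h (funext hc)
  rw [dlt, map_prod]
  apply Finset.prod_eq_zero (Finset.mem_univ i)
  rw [map_sub, map_pow, map_sub, eval_X, eval_C, map_one,
    ZMod.pow_card_sub_one_eq_one (sub_ne_zero.2 hi), sub_self]

lemma dlt_eval_self (a : Fin n → ZMod p) :
    eval a (dlt p a) = (-1 : ZMod p) ^ n := by
  rw [dlt, map_prod]
  have : ∀ i : Fin n, eval a ((X i - C (a i)) ^ (p - 1) - 1) = -1 := by
    intro i
    rw [map_sub, map_pow, map_sub, eval_X, eval_C, map_one, sub_self,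
      zero_pow (by have := hp.out.two_le; omega), zero_sub]
  rw [Finset.prod_congr rfl (fun i _ => this i), Finset.prod_const, Finset.card_univ,
    Fintype.card_fin]

lemma dlt_eval_self_sq (a : Fin n → ZMod p) :
    eval a (dlt p a) * eval a (dlt p a) = 1 := by
  rw [dlt_eval_self, ← mul_pow, neg_mul_neg, one_mul, one_pow]

lemma gP_coeff (i : Fin n) (d : Fin n →₀ ℕ) :
    coeff d (gP p i) =
      (if Finsupp.single i p = d then 1 else 0) - (if Finsupp.single i 1 = d then 1 else 0) := by
  classical
  rw [gP, coeff_sub, coeff_X_pow, coeff_X']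

lemma single_injective_exp {i : Fin n} {j k : ℕ} (h : Finsupp.single i j = Finsupp.single i k) :
    j = k := by
  have := DFunLike.congr_fun h i
  simpa [Finsupp.single_eq_same] using this

lemma gP_support (i : Fin n) :
    ∀ d ∈ (gP p i).support, d = Finsupp.single i p ∨ d = Finsupp.single i 1 := by
  intro d hd
  rw [MvPolynomial.mem_support_iff, gP_coeff] at hd
  by_contra hc
  push_neg at hc
  rw [if_neg (fun h => hc.1 h.symm), if_neg (fun h => hc.2 h.symm), sub_zero] at hd
  exact hd rfl

lemma gP_coeff_lead (i : Fin n) : coeff (Finsupp.single i p) (gP p i) = 1 := by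
  rw [gP_coeff, if_pos rfl, if_neg, sub_zero]
  intro h
  have := single_injective_exp h
  have := hp.out.two_le
  omega

lemma gP_ne_zero (i : Fin n) : gP p i ≠ 0 := fun h => by
  have := gP_coeff_lead (p := p) i
  rw [h, coeff_zero] at this
  exact (one_ne_zero : (1 : ZMod p) ≠ 0) this.symm

lemma gP_lead_mem (i : Fin n) : Finsupp.single i p ∈ (gP p i).support :=
  MvPolynomial.mem_support_iff.2 (by rw [gP_coeff_lead]; exact (one_ne_zero : (1 : ZMod p) ≠ 0))

lemma gP_leadMon (m : MonomialOrder (Fin n)) (i : Fin n) :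
    leadMon m (gP p i) = Finsupp.single i p := by
  apply leadMon_eq m (gP_lead_mem i)
  intro d hd
  rcases gP_support i d hd with rfl | rfl
  · exact le_rfl
  · exact m.toSyn_monotone (single_le_single (hp.out.two_le.trans' (by omega)))

lemma gP_leadCoeff (m : MonomialOrder (Fin n)) (i : Fin n) :
    leadCoeff m (gP p i) = 1 := by
  rw [leadCoeff, gP_leadMon, gP_coeff_lead]

lemma gP_eval (i : Fin n) (s : Fin n → ZMod p) : eval s (gP p i) = 0 := by
  rw [gP, map_sub, map_pow, eval_X, ZMod.pow_card, sub_self]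

end P2

section P3

variable {p : ℕ} [hp : Fact p.Prime]

lemma key_vanish {a : Fin n → ZMod p} {f : MvPolynomial (Fin n) (ZMod p)}
    (hf : ∀ s, s ≠ a → eval s f = 0)
    (hsupp : ∀ d ∈ f.support, ∀ i, d i < p)
    (hT : coeff (T p n) f = 0) : f = 0 := by
  classical
  haveI : NeZero p := ⟨hp.out.pos.ne'⟩
  set c := eval a f * eval a (dlt p a) with hc
  set h := f - C c * dlt p a with hh
  have heval : ∀ s, eval s h = 0 := by
    intro s
    by_cases hs : s = a
    · subst hs
      rw [hh, map_sub, map_mul, eval_C, hc, mul_assoc, dlt_eval_self_sq, mul_one, sub_self]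
    · rw [hh, map_sub, map_mul, eval_C, hf s hs, dlt_eval_ne a s hs, mul_zero, sub_zero]
  have hdeg : h ∈ restrictDegree (Fin n) (ZMod p) (Fintype.card (ZMod p) - 1) := by
    rw [mem_restrictDegree, ZMod.card]
    intro d hd i
    rcases Finset.mem_union.1 (MvPolynomial.support_sub _ f (C c * dlt p a) hd) with h1 | h1
    · have := hsupp d h1 i
      omega
    · have hd2 : d ∈ (dlt p a).support := by
        rw [MvPolynomial.mem_support_iff] at h1 ⊢
        intro h0
        exact h1 (by rw [coeff_C_mul, h0, mul_zero])
      have := dlt_support a d hd2 i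
      rwa [T_apply] at this
  have h0 : h = 0 := MvPolynomial.eq_zero_of_eval_eq_zero (σ := Fin n) (K := ZMod p) h heval hdeg
  have hf2 : f = C c * dlt p a := by rwa [hh, sub_eq_zero] at h0
  have hcT : coeff (T p n) f = c := by rw [hf2, coeff_C_mul, dlt_coeff_T, mul_one]
  rw [hT] at hcT
  rw [hf2, ← hcT, map_zero, zero_mul]

end P3

section P4

variable {p : ℕ} [hp : Fact p.Prime]

/-- standard monomials: not divisible by any `X i ^ p` nor by `∏ X i ^ (p-1)` -/
def Bp (p : ℕ) (d : Fin n →₀ ℕ) : Prop := (∀ i, d i < p) ∧ (∃ i, d i < p - 1)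

lemma Bp_zero (hn : 1 ≤ n) : Bp p (0 : Fin n →₀ ℕ) := by
  have h2 := hp.out.two_le
  exact ⟨fun i => by simp; omega, ⟨⟨0, by omega⟩, by simp; omega⟩⟩

lemma not_Bp_T : ¬ Bp p (T p n) := by
  rintro ⟨-, i, hi⟩
  rw [T_apply] at hi
  omega

lemma not_Bp_of_T_le {d : Fin n →₀ ℕ} (h : T p n ≤ d) : ¬ Bp p d := by
  rintro ⟨-, i, hi⟩
  have := h i
  rw [T_apply] at this
  omega

lemma Bp_of_le_T {d : Fin n →₀ ℕ} (h : d ≤ T p n) (hne : d ≠ T p n) : Bp p d := by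
  have h2 := hp.out.two_le
  constructor
  · intro i
    have := h i
    rw [T_apply] at this
    omega
  · by_contra hc
    push_neg at hc
    apply hne
    refine Finsupp.ext fun i => ?_
    exact le_antisymm (h i) (le_of_eq_of_le (T_apply p i) (hc i))

open Classical in
/-- The universal reduced Gröbner basis. -/
noncomputable def G0 (p : ℕ) [Fact p.Prime] (a : Fin n → ZMod p) :
    Finset (MvPolynomial (Fin n) (ZMod p)) :=
  insert (dlt p a) (if 2 ≤ n then Finset.image (gP p) Finset.univ else ∅)

lemma mem_G0 {a : Fin n → ZMod p} {g : MvPolynomial (Fin n) (ZMod p)} :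
    g ∈ G0 p a ↔ g = dlt p a ∨ (2 ≤ n ∧ ∃ i, g = gP p i) := by
  classical
  by_cases h2 : 2 ≤ n <;> simp [G0, h2, eq_comm]

lemma dlt_mem_G0 (a : Fin n → ZMod p) : dlt p a ∈ G0 p a := mem_G0.2 (Or.inl rfl)

lemma gP_mem_G0 (a : Fin n → ZMod p) (h2 : 2 ≤ n) (i : Fin n) : gP p i ∈ G0 p a :=
  mem_G0.2 (Or.inr ⟨h2, i, rfl⟩)

lemma exists_ne_idx (h2 : 2 ≤ n) (i : Fin n) : ∃ j : Fin n, j ≠ i := by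
  rcases i with ⟨iv, hiv⟩
  by_cases h : iv = 0
  · exact ⟨⟨1, by omega⟩, by simp [Fin.ext_iff, h]⟩
  · exact ⟨⟨0, by omega⟩, by simp [Fin.ext_iff]; omega⟩

lemma single_p_not_le_T (i : Fin n) : ¬ Finsupp.single i p ≤ T p n := by
  intro h
  have := h i
  rw [Finsupp.single_eq_same, T_apply] at this
  have := hp.out.two_le
  omega

lemma dlt_ne_gP (a : Fin n → ZMod p) (i : Fin n) : dlt p a ≠ gP p i := by
  intro h
  have h1 : Finsupp.single i p ∈ (dlt p a).support := h ▸ gP_lead_mem i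
  exact single_p_not_le_T i (dlt_support a _ h1)

lemma gP_inj {i j : Fin n} (h : gP p i = gP p j) : i = j := by
  by_contra hne
  have h2 := hp.out.two_le
  have h1 : coeff (Finsupp.single i p) (gP p j) = 1 := h ▸ gP_coeff_lead i
  rw [gP_coeff, if_neg, if_neg, sub_zero] at h1
  · exact one_ne_zero h1.symm
  · intro hc
    have := DFunLike.congr_fun hc i
    rw [Finsupp.single_eq_same, Finsupp.single_eq_of_ne' (Ne.symm hne)] at this
    omega
  · intro hc
    have := DFunLike.congr_fun hc i
    rw [Finsupp.single_eq_same, Finsupp.single_eq_of_ne' (Ne.symm hne)] at this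
    omega

/-- all the basic facts about elements of `G0` -/
lemma G0_elem_facts (m : MonomialOrder (Fin n)) {a : Fin n → ZMod p}
    {g : MvPolynomial (Fin n) (ZMod p)} (hg : g ∈ G0 p a) :
    g ≠ 0 ∧ leadCoeff m g = 1 ∧ (∀ s, s ≠ a → eval s g = 0) ∧
      (∀ d ∈ g.support, d ≠ leadMon m g → Bp p d) := by
  rcases mem_G0.1 hg with rfl | ⟨h2, i, rfl⟩
  · refine ⟨dlt_ne_zero a, dlt_leadCoeff m a, dlt_eval_ne a, ?_⟩
    intro d hd hne
    rw [dlt_leadMon] at hne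
    exact Bp_of_le_T (dlt_support a d hd) hne
  · refine ⟨gP_ne_zero i, gP_leadCoeff m i, fun s _ => gP_eval i s, ?_⟩
    intro d hd hne
    rw [gP_leadMon] at hne
    rcases gP_support i d hd with rfl | rfl
    · exact absurd rfl hne
    · have h2p := hp.out.two_le
      obtain ⟨j, hj⟩ := exists_ne_idx h2 i
      refine ⟨fun k => ?_, ⟨j, ?_⟩⟩
      · classical
        rw [Finsupp.single_apply]
        split <;> omega
      · rw [Finsupp.single_eq_of_ne' (Ne.symm hj)]
        omega

lemma reducer_exists (m : MonomialOrder (Fin n)) (hn : 1 ≤ n) (a : Fin n → ZMod p)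
    {d : Fin n →₀ ℕ} (hd : ¬ Bp p d) : ∃ g ∈ G0 p a, leadMon m g ≤ d := by
  have h2p := hp.out.two_le
  rw [Bp, not_and_or] at hd
  push_neg at hd
  rcases hd with ⟨i, hi⟩ | hall
  · by_cases h2 : 2 ≤ n
    · refine ⟨gP p i, gP_mem_G0 a h2 i, ?_⟩
      rw [gP_leadMon, Finsupp.single_le_iff]
      omega
    · have hone : n = 1 := by omega
      refine ⟨dlt p a, dlt_mem_G0 a, ?_⟩
      rw [dlt_leadMon, Finsupp.le_def]
      intro j
      have hij : j = i := by
        rcases i with ⟨iv, hiv⟩; rcases j with ⟨jv, hjv⟩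
        simp only [Fin.mk.injEq]
        omega
      rw [T_apply, hij]
      omega
  · refine ⟨dlt p a, dlt_mem_G0 a, ?_⟩
    rw [dlt_leadMon, Finsupp.le_def]
    intro j
    rw [T_apply]
    have := hall j
    omega

end P4

section P5

variable {p : ℕ} [hp : Fact p.Prime]

lemma GBkey (m : MonomialOrder (Fin n)) (hn : 1 ≤ n) (a : Fin n → ZMod p)
    {f : MvPolynomial (Fin n) (ZMod p)} (hfI : ∀ s, s ≠ a → eval s f = 0) (hf0 : f ≠ 0) :
    ¬ Bp p (leadMon m f) := by
  classical
  intro hB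
  have main : ∀ s : m.syn, ∀ f : MvPolynomial (Fin n) (ZMod p),
      (∀ t, t ≠ a → eval t f = 0) → f ≠ 0 → Bp p (leadMon m f) →
      (f.support.filter fun d => ¬ Bp p d).sup m.toSyn = s → False := by
    intro s
    induction s using WellFoundedLT.induction with
    | _ s ih =>
    intro f hfI hf0 hB hmeas
    set F := f.support.filter (fun d => ¬ Bp p d) with hF
    rcases Finset.eq_empty_or_nonempty F with hFe | hFne
    · -- all support monomials are standard: f = 0, contradiction
      have hstd : ∀ d ∈ f.support, Bp p d := by
        intro d hd
        by_contra hc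
        have : d ∈ F := Finset.mem_filter.2 ⟨hd, hc⟩
        rw [hFe] at this
        exact absurd this (Finset.notMem_empty d)
      apply hf0
      apply key_vanish hfI (fun d hd i => (hstd d hd).1 i)
      by_contra hT
      exact not_Bp_T (hstd _ (MvPolynomial.mem_support_iff.2 hT))
    · obtain ⟨d, hdF, hsup⟩ := Finset.exists_mem_eq_sup F hFne (fun d => m.toSyn d)
      obtain ⟨hdsupp, hdB⟩ := Finset.mem_filter.1 hdF
      obtain ⟨g, hgG0, hglm⟩ := reducer_exists m hn a hdB
      obtain ⟨hg0, hglc, hgeval, hgsupp⟩ := G0_elem_facts m hgG0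
      set μ := leadMon m g with hμ
      set e := d - μ with he
      have hed : e + μ = d := tsub_add_cancel_of_le hglm
      set L := leadMon m f with hL
      have hLd : d ≠ L := fun h => hdB (h ▸ hB)
      have htdL : m.toSyn d < m.toSyn L :=
        lt_of_le_of_ne (le_leadMon m hdsupp) (fun h => hLd (m.toSyn.injective h))
      set q : MvPolynomial (Fin n) (ZMod p) := monomial e 1 * g with hq
      -- all monomials of q are ≼ d, with equality only at d itself
      have hqc : ∀ d', coeff d' q ≠ 0 →
          m.toSyn d' ≤ m.toSyn d ∧ (d' ≠ d → m.toSyn d' < m.toSyn d) := by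
        intro d' hd'
        rw [hq, coeff_monomial_mul'] at hd'
        by_cases hle : e ≤ d'
        · rw [if_pos hle, one_mul] at hd'
          have hx : d' - e ∈ g.support := MvPolynomial.mem_support_iff.2 hd'
          have hxd' : e + (d' - e) = d' := by
            rw [add_comm]
            exact tsub_add_cancel_of_le hle
          have hxle : m.toSyn (d' - e) ≤ m.toSyn μ := le_leadMon m hx
          constructor
          · calc m.toSyn d' = m.toSyn e + m.toSyn (d' - e) := by rw [← map_add, hxd']
            _ ≤ m.toSyn e + m.toSyn μ := by exact add_le_add le_rfl hxle
            _ = m.toSyn d := by rw [← map_add, hed]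
          · intro hne
            have hxμ : d' - e ≠ μ := by
              intro hc
              apply hne
              rw [← hxd', hc, hed]
            calc m.toSyn d' = m.toSyn e + m.toSyn (d' - e) := by rw [← map_add, hxd']
            _ < m.toSyn e + m.toSyn μ :=
              add_lt_add_of_le_of_lt le_rfl (lt_of_le_of_ne hxle (fun h => hxμ (m.toSyn.injective h)))
            _ = m.toSyn d := by rw [← map_add, hed]
        · rw [if_neg hle] at hd'
          exact absurd rfl hd'
      have hqd : coeff d q = 1 := by
        rw [hq, ← hed, coeff_monomial_mul, one_mul, ← leadCoeff, ← hμ] at *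
        exact hglc
      set f₁ := f - C (coeff d f) * q with hf₁
      have hc1 : ∀ d', coeff d' f₁ = coeff d' f - coeff d f * coeff d' q := by
        intro d'
        rw [hf₁, coeff_sub, coeff_C_mul]
      have hcoeffd : coeff d f₁ = 0 := by rw [hc1, hqd, mul_one, sub_self]
      have hcoeffL : coeff L f₁ = coeff L f := by
        rw [hc1]
        by_cases hq0 : coeff L q = 0
        · rw [hq0, mul_zero, sub_zero]
        · exact absurd ((hqc L hq0).1) (not_le_of_gt htdL)
      have hLsupp : coeff L f ≠ 0 :=
        MvPolynomial.mem_support_iff.1 (hL ▸ leadMon_mem m hf0)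
      have hf₁0 : f₁ ≠ 0 := fun h => hLsupp (by rw [← hcoeffL, h, coeff_zero])
      have hsupp₁ : ∀ d' ∈ f₁.support, m.toSyn d' ≤ m.toSyn L := by
        intro d' hd'
        rw [MvPolynomial.mem_support_iff, hc1] at hd'
        by_cases hd'f : coeff d' f = 0
        · rw [hd'f, zero_sub, neg_ne_zero] at hd'
          have := (hqc d' (fun h => hd' (by rw [h, mul_zero]))).1
          exact this.trans htdL.le
        · exact le_leadMon m (MvPolynomial.mem_support_iff.2 hd'f)
      have hlm₁ : leadMon m f₁ = L :=
        leadMon_eq m (MvPolynomial.mem_support_iff.2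
          (fun h => hLsupp (by rw [← hcoeffL, h]))) hsupp₁
      have hfI₁ : ∀ t, t ≠ a → eval t f₁ = 0 := by
        intro t ht
        rw [hf₁, map_sub, map_mul, map_mul, hfI t ht, hgeval t ht, mul_zero, mul_zero, sub_zero]
      -- the measure strictly decreases
      have hd0 : d ≠ 0 := fun h => hdB (h ▸ Bp_zero hn)
      have hbot : (⊥ : m.syn) < m.toSyn d := by
        rw [bot_lt_iff_ne_bot]
        intro h
        apply hd0
        apply m.toSyn.injective
        rw [h, MonomialOrder.bot_eq_zero, map_zero]
      have hmeas₁ : (f₁.support.filter fun d' => ¬ Bp p d').sup m.toSyn < m.toSyn d := by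
        rw [Finset.sup_lt_iff hbot]
        intro d' hd'
        obtain ⟨hd'supp, hd'B⟩ := Finset.mem_filter.1 hd'
        have hd'ne : d' ≠ d := by
          intro h
          rw [MvPolynomial.mem_support_iff, h, hcoeffd] at hd'supp
          exact hd'supp rfl
        rw [MvPolynomial.mem_support_iff, hc1] at hd'supp
        by_cases hd'f : coeff d' f = 0
        · rw [hd'f, zero_sub, neg_ne_zero] at hd'supp
          exact (hqc d' (fun h => hd'supp (by rw [h, mul_zero]))).2 hd'ne
        · have : d' ∈ F := Finset.mem_filter.2 ⟨MvPolynomial.mem_support_iff.2 hd'f, hd'B⟩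
          have hle : m.toSyn d' ≤ m.toSyn d := by
            rw [← hsup]
            exact Finset.le_sup this
          exact lt_of_le_of_ne hle (fun h => hd'ne (m.toSyn.injective h))
      rw [hmeas] at hsup
      exact ih _ (hsup ▸ hmeas₁) f₁ hfI₁ hf₁0 (hlm₁ ▸ hB) rfl
  exact main _ f hfI hf0 hB rfl

end P5

section P6

variable {p : ℕ} [hp : Fact p.Prime]

lemma mem_vi {a : Fin n → ZMod p} {f : MvPolynomial (Fin n) (ZMod p)} :
    f ∈ vanishingIdeal (ZMod p) ({a}ᶜ : Set (Fin n → ZMod p)) ↔ ∀ s, s ≠ a → eval s f = 0 := by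
  rw [mem_vanishingIdeal_iff]
  constructor
  · intro h s hs
    exact h s (by simpa using hs)
  · intro h s hs
    exact h s (by simpa using hs)

lemma G0_antichain (m : MonomialOrder (Fin n)) {a : Fin n → ZMod p}
    {g g' : MvPolynomial (Fin n) (ZMod p)} (hg : g ∈ G0 p a) (hg' : g' ∈ G0 p a)
    (hle : leadMon m g ≤ leadMon m g') : leadMon m g = leadMon m g' := by
  have h2p := hp.out.two_le
  rcases mem_G0.1 hg with rfl | ⟨h2, i, rfl⟩ <;> rcases mem_G0.1 hg' with rfl | ⟨h2', j, rfl⟩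
  · rfl
  · exfalso
    rw [dlt_leadMon, gP_leadMon] at hle
    obtain ⟨k, hk⟩ := exists_ne_idx h2' j
    have := hle k
    rw [T_apply, Finsupp.single_eq_of_ne' (Ne.symm hk)] at this
    omega
  · exfalso
    rw [dlt_leadMon, gP_leadMon] at hle
    exact single_p_not_le_T i hle
  · rw [gP_leadMon, gP_leadMon] at hle ⊢
    by_cases hij : i = j
    · rw [hij]
    · exfalso
      have := hle i
      rw [Finsupp.single_eq_same, Finsupp.single_eq_of_ne' (Ne.symm hij)] at this
      omega

lemma G0_isRGB (m : MonomialOrder (Fin n)) (hn : 1 ≤ n) (a : Fin n → ZMod p) :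
    IsReducedGroebnerBasis m (vanishingIdeal (ZMod p) ({a}ᶜ : Set (Fin n → ZMod p))) (G0 p a) := by
  have h2p := hp.out.two_le
  refine ⟨⟨fun g hg => (G0_elem_facts m hg).1, ?_, ?_⟩,
    fun g hg => (G0_elem_facts m hg).2.1, ?_⟩
  · intro g hg
    exact mem_vi.2 (G0_elem_facts m (Finset.mem_coe.1 hg)).2.2.1
  · intro f hf hf0
    exact reducer_exists m hn a (GBkey m hn a (mem_vi.1 hf) hf0)
  · intro g hg g' hg' hne d hd hled
    rcases mem_G0.1 hg' with rfl | ⟨h2', i, rfl⟩ <;> rcases mem_G0.1 hg with rfl | ⟨h2, j, rfl⟩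
    · exact hne rfl
    · rw [dlt_leadMon] at hled
      obtain ⟨k, hk⟩ := exists_ne_idx h2 j
      have h1 := hled k
      rw [T_apply] at h1
      have h0 : d k = 0 := by
        rcases gP_support j d hd with rfl | rfl <;>
          rw [Finsupp.single_eq_of_ne' (Ne.symm hk)]
      omega
    · rw [gP_leadMon] at hled
      have h1 := hled i
      rw [Finsupp.single_eq_same] at h1
      have h2 := dlt_support a d hd i
      rw [T_apply] at h2
      omega
    · have hij : i ≠ j := fun h => hne (by rw [h])
      rw [gP_leadMon] at hled
      have h1 := hled i
      rw [Finsupp.single_eq_same] at h1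
      have h0 : d i = 0 := by
        rcases gP_support j d hd with rfl | rfl <;>
          rw [Finsupp.single_eq_of_ne' (Ne.symm hij)]
      omega

lemma RGB_eq_G0 (m : MonomialOrder (Fin n)) (hn : 1 ≤ n) (a : Fin n → ZMod p)
    {G : Finset (MvPolynomial (Fin n) (ZMod p))}
    (h : IsReducedGroebnerBasis m (vanishingIdeal (ZMod p) ({a}ᶜ : Set (Fin n → ZMod p))) G) :
    G = G0 p a := by
  obtain ⟨⟨hGne, hGI, hGB⟩, hGmon, hGred⟩ := h
  have step1 : ∀ g ∈ G, ∃ g₀ ∈ G0 p a, leadMon m g₀ = leadMon m g := by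
    intro g hg
    have hgI : ∀ s, s ≠ a → eval s g = 0 := mem_vi.1 (hGI hg)
    obtain ⟨g₀, hg₀, hle⟩ := reducer_exists m hn a (GBkey m hn a hgI (hGne g hg))
    have hfacts := G0_elem_facts m hg₀
    obtain ⟨g', hg', hle'⟩ := hGB g₀ (mem_vi.2 hfacts.2.2.1) hfacts.1
    have hgg : g' = g := by
      by_contra hne
      exact hGred g hg g' hg' hne (leadMon m g) (leadMon_mem m (hGne g hg)) (hle'.trans hle)
    subst hgg
    exact ⟨g₀, hg₀, le_antisymm hle hle'⟩
  have step2 : ∀ g₀ ∈ G0 p a, ∃ g ∈ G, leadMon m g = leadMon m g₀ := by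
    intro g₀ hg₀
    have hfacts := G0_elem_facts m hg₀
    obtain ⟨g, hg, hle⟩ := hGB g₀ (mem_vi.2 hfacts.2.2.1) hfacts.1
    obtain ⟨g₀', hg₀', heq⟩ := step1 g hg
    have hac := G0_antichain m hg₀' hg₀ (heq.trans_le hle)
    exact ⟨g, hg, heq.symm.trans hac⟩
  have step3 : ∀ g ∈ G, ∀ g₀ ∈ G0 p a, leadMon m g = leadMon m g₀ → g = g₀ := by
    intro g hg g₀ hg₀ hlead
    have hfacts := G0_elem_facts m hg₀
    have hgI : ∀ s, s ≠ a → eval s g = 0 := mem_vi.1 (hGI hg)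
    have hBsupp : ∀ d ∈ (g - g₀).support, Bp p d := by
      intro d hd
      rw [MvPolynomial.mem_support_iff, coeff_sub] at hd
      have hdμ : d ≠ leadMon m g := by
        intro hc
        apply hd
        have h1 : coeff d g = 1 := by
          rw [hc]
          exact hGmon g hg
        have h2 : coeff d g₀ = 1 := by
          rw [hc, hlead]
          exact hfacts.2.1
        rw [h1, h2, sub_self]
      by_cases hdg : coeff d g = 0
      · have hdg₀ : d ∈ g₀.support := by
          rw [MvPolynomial.mem_support_iff]
          intro hc
          rw [hdg, hc, sub_self] at hd
          exact hd rfl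
        exact hfacts.2.2.2 d hdg₀ (fun hc => hdμ (hc.trans hlead.symm))
      · by_contra hc
        obtain ⟨g₀'', hg₀'', hle''⟩ := reducer_exists m hn a hc
        obtain ⟨g'', hg'', heq''⟩ := step2 g₀'' hg₀''
        by_cases hgg : g'' = g
        · apply hdμ
          apply m.toSyn.injective
          apply le_antisymm (le_leadMon m (MvPolynomial.mem_support_iff.2 hdg))
          apply m.toSyn_monotone
          rw [← hgg, heq'']
          exact hle''
        · exact hGred g hg g'' hg'' hgg d (MvPolynomial.mem_support_iff.2 hdg)
            (heq''.trans_le hle'')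
    have hzero : g - g₀ = 0 := by
      apply key_vanish (a := a)
      · intro s hs
        rw [map_sub, hgI s hs, hfacts.2.2.1 s hs, sub_self]
      · exact fun d hd i => (hBsupp d hd).1 i
      · by_contra hT
        exact not_Bp_T (hBsupp _ (MvPolynomial.mem_support_iff.2 hT))
    rw [← sub_eq_zero]
    exact hzero
  apply Finset.ext
  intro g
  constructor
  · intro hg
    obtain ⟨g₀, hg₀, heq⟩ := step1 g hg
    rw [step3 g hg g₀ hg₀ heq.symm]
    exact hg₀
  · intro hg₀
    obtain ⟨g', hg', heq⟩ := step2 g hg₀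
    rw [← step3 g' hg' g hg₀ heq]
    exact hg'

end P6

end AuxGB

/-- If `S ⊆ (ZMod p)^n` has exactly `pⁿ - 1` elements, then its vanishing ideal has
exactly one reduced Gröbner basis. -/
theorem num_reduced_GB_all_but_one_point (p : ℕ) [Fact p.Prime] (n : ℕ) (hn : 1 ≤ n)
    (S : Set (Fin n → ZMod p)) (hS : S.ncard = p ^ n - 1) :
    numReducedGB (vanishingIdeal (ZMod p) S) = 1 := by
  classical
  haveI : NeZero p := ⟨(Fact.out : p.Prime).pos.ne'⟩
  have hcard : Nat.card (Fin n → ZMod p) = p ^ n := by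
    rw [Nat.card_eq_fintype_card, Fintype.card_fun, ZMod.card, Fintype.card_fin]
  have hpos : 0 < p ^ n := pow_pos (Fact.out : p.Prime).pos n
  have htot := Set.ncard_add_ncard_compl S
  rw [hcard] at htot
  have hc1 : Sᶜ.ncard = 1 := by omega
  obtain ⟨a, ha⟩ := Set.ncard_eq_one.1 hc1
  have hSa : S = ({a}ᶜ : Set (Fin n → ZMod p)) := by rw [← compl_compl S, ha]
  subst hSa
  rw [numReducedGB]
  have hset : {G : Finset (MvPolynomial (Fin n) (ZMod p)) |
      ∃ m : MonomialOrder.{0,0} (Fin n),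
        IsReducedGroebnerBasis m (vanishingIdeal (ZMod p) ({a}ᶜ : Set (Fin n → ZMod p))) G}
      = {AuxGB.G0 p a} := by
    ext G
    simp only [Set.mem_setOf_eq, Set.mem_singleton_iff]
    constructor
    · rintro ⟨m, hm⟩
      exact AuxGB.RGB_eq_G0 m hn a hm
    · rintro rfl
      exact ⟨MonomialOrder.lex, AuxGB.G0_isRGB _ hn a⟩
  rw [hset, Set.ncard_singleton]
end

section
/- Let p ≥ 1 and n ≥ 1 be natural numbers, and let S ⊆ (Fin n → ℕ) be a finite staircase (downward-closed set) of cardinality m all of whose elements have every coordinate strictly less than p. Then for each coordinate i ∈ Fin n, the sum Σ_{u ∈ S} u i is at most (p(p−1)/2)·⌊m/p⌋ + choose(m mod p, 2). -/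
/-!
Forgetting coordinate `i` splits `S` into lines parallel to the `i`-th axis. Since `S` is
downward closed, the `i`-th coordinates on a line of `k` points are exactly `0, …, k - 1`, so the
line contributes `choose k 2`, and `k ≤ p`. It remains to maximise `∑ choose kⱼ 2` subject to
`∑ kⱼ = m` and `kⱼ ≤ p`; by convexity of `choose · 2` the greedy split into `⌊m/p⌋` lines of
length `p` and one of length `m % p` is optimal.
-/

open Finset

namespace Nat

theorem choose_two_add (a b : ℕ) : (a + b).choose 2 = a.choose 2 + b.choose 2 + a * b := by
  simp [add_choose_eq, Finset.Nat.antidiagonal_succ]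
  ring

theorem choose_two_add_choose_two_le {s k : ℕ} (hsk : s ≤ k) (d : ℕ) :
    (s + d).choose 2 + k.choose 2 ≤ (k + d).choose 2 + s.choose 2 := by
  rw [choose_two_add, choose_two_add]
  nlinarith [Nat.mul_le_mul_right d hsk]

end Nat

/-- The value of `∑ choose kⱼ 2` for the split of `a` into parts `p, …, p, a % p`. -/
def packedChooseTwo (p a : ℕ) : ℕ := p.choose 2 * (a / p) + (a % p).choose 2

theorem packedChooseTwo_add_choose_two_le {p k : ℕ} (hk : k ≤ p) (a : ℕ) :
    packedChooseTwo p a + k.choose 2 ≤ packedChooseTwo p (a + k) := by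
  rcases Nat.eq_zero_or_pos p with rfl | hp
  · simp [Nat.le_zero.mp hk]
  unfold packedChooseTwo
  obtain ⟨q, r, hr, rfl⟩ : ∃ q r, r < p ∧ a = p * q + r :=
    ⟨a / p, a % p, Nat.mod_lt a hp, (Nat.div_add_mod a p).symm⟩
  have hdiv (q t : ℕ) (ht : t < p) : (p * q + t) / p = q := by
    rw [Nat.mul_add_div hp, Nat.div_eq_of_lt ht, add_zero]
  have hmod (q t : ℕ) (ht : t < p) : (p * q + t) % p = t := by
    rw [Nat.mul_add_mod, Nat.mod_eq_of_lt ht]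
  rw [hdiv q r hr, hmod q r hr, Nat.add_assoc (p * q)]
  by_cases hrk : r + k < p
  · rw [hdiv q _ hrk, hmod q _ hrk, Nat.choose_two_add]
    omega
  · obtain ⟨s, hs⟩ : ∃ s, r + k = p + s := ⟨r + k - p, by omega⟩
    have hsp : s < p := by omega
    rw [hs, ← Nat.add_assoc, ← Nat.mul_succ, hdiv _ s hsp, hmod _ s hsp]
    -- moving `p - k` from the part `r` to the part `k` fills it up to `p`
    have := Nat.choose_two_add_choose_two_le (show s ≤ k by omega) (p - k)
    rw [show s + (p - k) = r by omega, show k + (p - k) = p by omega] at this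
    rw [Nat.mul_succ]
    omega

theorem sum_choose_two_le_packedChooseTwo {α : Type*} {p : ℕ} (W : Finset α) {g : α → ℕ}
    (hg : ∀ w ∈ W, g w ≤ p) :
    ∑ w ∈ W, (g w).choose 2 ≤ packedChooseTwo p (∑ w ∈ W, g w) := by
  classical
  induction W using Finset.induction_on with
  | empty => simp [packedChooseTwo]
  | insert a W ha ih =>
    rw [sum_insert ha, sum_insert ha, add_comm, add_comm (g a)]
    grw [ih fun w hw ↦ hg w (mem_insert_of_mem hw)]
    exact packedChooseTwo_add_choose_two_le (hg a (mem_insert_self a W)) _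

theorem Finset.sum_id_eq_choose_two_card_of_isLowerSet {T : Finset ℕ}
    (hT : IsLowerSet (T : Set ℕ)) : ∑ t ∈ T, t = T.card.choose 2 := by
  obtain hT | ⟨a, hT⟩ := hT.eq_univ_or_Iio
  · exact absurd (hT ▸ T.finite_toSet) Set.infinite_univ
  · rw [← coe_range, coe_inj] at hT
    rw [hT, card_range, sum_range_id, Nat.choose_two_right]

section LineFiber

open Classical

variable {ι : Type*}

noncomputable def lineFiber (S : Finset (ι → ℕ)) (i : ι) (w : ι → ℕ) : Finset (ι → ℕ) :=
  {u ∈ S | Function.update u i 0 = w}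

variable {S : Finset (ι → ℕ)} {i : ι} {w : ι → ℕ}

theorem injOn_apply_lineFiber : Set.InjOn (fun u : ι → ℕ ↦ u i) (lineFiber S i w) := by
  intro u hu v hv (huv : u i = v i)
  have hu : Function.update u i 0 = w := (mem_filter.mp hu).2
  have hv : Function.update v i 0 = w := (mem_filter.mp hv).2
  calc u = Function.update (Function.update u i 0) i (u i) := by simp
    _ = Function.update (Function.update v i 0) i (v i) := by rw [hu, hv, huv]
    _ = v := by simp

theorem isLowerSet_image_apply_lineFiber (hS : IsLowerSet (S : Set (ι → ℕ))) :
    IsLowerSet (((lineFiber S i w).image fun u ↦ u i : Finset ℕ) : Set ℕ) := by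
  intro t s hst ht
  obtain ⟨u, hu, rfl⟩ := mem_image.mp ht
  obtain ⟨huS, rfl⟩ := mem_filter.mp hu
  have hle : Function.update u i s ≤ u := update_le_self_iff.mpr hst
  refine mem_image.mpr ⟨Function.update u i s, mem_filter.mpr ⟨hS hle huS, ?_⟩, by simp⟩
  simp

theorem sum_apply_lineFiber (hS : IsLowerSet (S : Set (ι → ℕ))) :
    ∑ u ∈ lineFiber S i w, u i = (lineFiber S i w).card.choose 2 := by
  rw [← card_image_of_injOn injOn_apply_lineFiber,
    ← sum_id_eq_choose_two_card_of_isLowerSet (isLowerSet_image_apply_lineFiber hS),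
    sum_image injOn_apply_lineFiber]

theorem card_lineFiber_le {p : ℕ} (hlt : ∀ u ∈ S, u i < p) : (lineFiber S i w).card ≤ p := by
  rw [← card_image_of_injOn injOn_apply_lineFiber, ← card_range p]
  refine card_le_card fun t ht ↦ ?_
  obtain ⟨u, hu, rfl⟩ := mem_image.mp ht
  exact mem_range.mpr (hlt u (mem_filter.mp hu).1)

theorem sum_apply_le_packedChooseTwo (hS : IsLowerSet (S : Set (ι → ℕ))) {p : ℕ}
    (hlt : ∀ u ∈ S, u i < p) : ∑ u ∈ S, u i ≤ packedChooseTwo p S.card := by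
  have hmaps : ∀ u ∈ S, Function.update u i 0 ∈ S.image (Function.update · i 0) :=
    fun u hu ↦ mem_image_of_mem _ hu
  calc ∑ u ∈ S, u i = ∑ w ∈ S.image (Function.update · i 0), ∑ u ∈ lineFiber S i w, u i :=
        (sum_fiberwise_of_maps_to hmaps _).symm
    _ = ∑ w ∈ S.image (Function.update · i 0), (lineFiber S i w).card.choose 2 :=
        sum_congr rfl fun w _ ↦ sum_apply_lineFiber hS
    _ ≤ packedChooseTwo p S.card := by
        rw [card_eq_sum_card_fiberwise hmaps]
        exact sum_choose_two_le_packedChooseTwo _ fun w _ ↦ card_lineFiber_le hlt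

end LineFiber

theorem staircase_coordinate_sum_le_general (p n : ℕ)
    (S : Finset (Fin n → ℕ)) (m : ℕ) (hm : S.card = m)
    (hstair : ∀ u ∈ S, ∀ v : Fin n → ℕ, (∀ i, v i ≤ u i) → v ∈ S)
    (hbound : ∀ u ∈ S, ∀ i, u i < p) (i : Fin n) :
    ∑ u ∈ S, u i ≤ p * (p - 1) / 2 * (m / p) + Nat.choose (m % p) 2 := by
  have hS : IsLowerSet (S : Set (Fin n → ℕ)) := fun u v hvu hu ↦ hstair u hu v hvu
  rw [← Nat.choose_two_right, ← hm]
  exact sum_apply_le_packedChooseTwo hS fun u hu ↦ hbound u hu i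

/-- If `S` is a finite staircase (downward-closed set) in `(Fin n → ℕ)` with `m` elements,
all of whose elements have every coordinate `< p`, then for each coordinate `i` the sum of
the `i`-th coordinates over `S` is at most `(p(p-1)/2)·⌊m/p⌋ + choose (m % p) 2`. -/
theorem staircase_coordinate_sum_le (p n : ℕ) (hp : 1 ≤ p) (hn : 1 ≤ n)
    (S : Finset (Fin n → ℕ)) (m : ℕ) (hm : S.card = m)
    (hstair : ∀ u ∈ S, ∀ v : Fin n → ℕ, (∀ i, v i ≤ u i) → v ∈ S)
    (hbound : ∀ u ∈ S, ∀ i, u i < p) (i : Fin n) :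
    ∑ u ∈ S, u i ≤ p * (p - 1) / 2 * (m / p) + Nat.choose (m % p) 2 :=
  staircase_coordinate_sum_le_general p n S m hm hstair hbound i
end
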